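/- arXiv:2403.16693 — 4 statements merged into one kernel-verified Lean document; each statement's English description precedes it below -/
import Mathlib

section
/- First characterization of the viscosity Neumann condition (Lemma 4.2): Let S₁⁺ = S₁(0,0) ∩ {z > 0}, T₁ = S₁(0,0) ∩ {z = 0}, let a^{ij} be bounded measurable symmetric uniformly elliptic coefficients, f ∈ C(T₁), F ∈ C(S₁⁺ ∪ T₁), and let U be continuous on the closure of S₁⁺. Then the following two conditions are equivalent: (ii) whenever ψ ∈ C_s touches U from above at a point (x₀,0) ∈ T₁, then ∂_zψ(x₀,0) ≥ f(x₀); (ii)' whenever ψ ∈ C_s touches U from above at a point (x₀,0) ∈ T₁, then either a^{ij}(x₀)∂_{ij}ψ(x₀,0) + lim_{z→0⁺} z^{2−1/s}∂_{zz}ψ(x₀,z) ≥ F(x₀,0), or ∂_zψ(x₀,0) ≥ f(x₀). (The analogous equivalence holds for touching from below with the reversed inequalities.) -/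
open Set Filter Topology MeasureTheory
open scoped RealInnerProductSpace

noncomputable section

/-- ℝⁿ as Euclidean space. -/
abbrev Euc (n : ℕ) : Type := EuclideanSpace ℝ (Fin n)

/-- Points of ℝⁿ⁺¹ = ℝⁿ × ℝ. -/
abbrev Pt (n : ℕ) : Type := Euc n × ℝ

/-- `h(z) = s²/(1−s)·|z|^{1/s}`. -/
def hfun (s z : ℝ) : ℝ := s ^ 2 / (1 - s) * |z| ^ (1 / s)

/-- `h'(z) = s/(1−s)·z·|z|^{1/s−2}`. -/
def hder (s z : ℝ) : ℝ := s / (1 - s) * z * |z| ^ (1 / s - 2)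

/-- `h''(z) = |z|^{1/s−2}` (for `z ≠ 0`). -/
def hsec (s z : ℝ) : ℝ := |z| ^ (1 / s - 2)

/-- Monge–Ampère quasi-distance associated to `h`. -/
def deltaH (s z₀ z : ℝ) : ℝ := hfun s z - hfun s z₀ - hder s z₀ * (z - z₀)

/-- One-dimensional Monge–Ampère section of `h`. -/
def secH (s R z₀ : ℝ) : Set ℝ := {z | deltaH s z₀ z < R}

/-- `δ_φ(x₀,x) = |x−x₀|²/2`. -/
def deltaX {n : ℕ} (x₀ x : Euc n) : ℝ := ‖x - x₀‖ ^ 2 / 2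

/-- Section of `φ(x)=|x|²/2` : the euclidean ball of radius `√(2R)`. -/
def secX {n : ℕ} (R : ℝ) (x₀ : Euc n) : Set (Euc n) := {x | deltaX x₀ x < R}

/-- `δ_Φ = δ_φ + δ_h` on ℝⁿ⁺¹. -/
def deltaPhi {n : ℕ} (s : ℝ) (p q : Pt n) : ℝ := deltaX p.1 q.1 + deltaH s p.2 q.2

/-- Monge–Ampère section in ℝⁿ⁺¹. -/
def secPhi {n : ℕ} (s R : ℝ) (p : Pt n) : Set (Pt n) := {q | deltaPhi s p q < R}

/-- Monge–Ampère cube in ℝⁿ. -/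
def cubeX {n : ℕ} (R : ℝ) (x₀ : Euc n) : Set (Euc n) :=
  {x | ∀ i, |x i - x₀ i| < Real.sqrt (2 * R)}

/-- Monge–Ampère cube in ℝⁿ⁺¹. -/
def cubePhi {n : ℕ} (s R : ℝ) (p : Pt n) : Set (Pt n) := cubeX R p.1 ×ˢ secH s R p.2

/-- The measure `μ_h` on ℝ, with density `h''`. -/
def muH (s : ℝ) : Measure ℝ :=
  volume.withDensity fun z => ENNReal.ofReal (|z| ^ (1 / s - 2))

/-- The measure `μ_Φ` on ℝⁿ⁺¹, with density `h''(z)`. -/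
def muPhi (n : ℕ) (s : ℝ) : Measure (Pt n) :=
  (volume : Measure (Pt n)).withDensity fun p => ENNReal.ofReal (|p.2| ^ (1 / s - 2))

/-- Partial derivative `∂_z`. -/
def pZ {n : ℕ} (U : Pt n → ℝ) (p : Pt n) : ℝ := deriv (fun t => U (p.1, t)) p.2

/-- Partial derivative `∂_zz`. -/
def pZZ {n : ℕ} (U : Pt n → ℝ) (p : Pt n) : ℝ :=
  deriv (fun t => deriv (fun t' => U (p.1, t')) t) p.2

/-- `i`-th standard basis vector of ℝⁿ. -/
def basisVec {n : ℕ} (i : Fin n) : Euc n := EuclideanSpace.single i 1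

/-- Partial derivative `∂_i` in the `x` variables. -/
def pX {n : ℕ} (U : Pt n → ℝ) (p : Pt n) (i : Fin n) : ℝ :=
  fderiv ℝ (fun x => U (x, p.2)) p.1 (basisVec i)

/-- Second partial derivative `∂_{ij}` in the `x` variables. -/
def pXX {n : ℕ} (U : Pt n → ℝ) (p : Pt n) (i j : Fin n) : ℝ :=
  fderiv ℝ (fun x => pX U (x, p.2) j) p.1 (basisVec i)

/-- The extension operator `a^{ij}(x)∂_{ij}U + |z|^{2−1/s}∂_{zz}U`. -/
def AOp {n : ℕ} (s : ℝ) (a : Euc n → Fin n → Fin n → ℝ) (U : Pt n → ℝ) (p : Pt n) : ℝ :=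
  (∑ i, ∑ j, a p.1 i j * pXX U p i j) + |p.2| ^ (2 - 1 / s) * pZZ U p

/-- Identity coefficients (giving the Laplacian in `x`). -/
def idCoef (n : ℕ) : Euc n → Fin n → Fin n → ℝ := fun _ i j => if i = j then 1 else 0

/-- Symmetric, uniformly elliptic coefficients on `Ω`. -/
def IsElliptic {n : ℕ} (lam Lam : ℝ) (a : Euc n → Fin n → Fin n → ℝ) (Ω : Set (Euc n)) : Prop :=
  ∀ x ∈ Ω, (∀ i j, a x i j = a x j i) ∧
    ∀ ξ : Fin n → ℝ,
      lam * ∑ i, ξ i ^ 2 ≤ ∑ i, ∑ j, a x i j * ξ i * ξ j ∧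
      ∑ i, ∑ j, a x i j * ξ i * ξ j ≤ Lam * ∑ i, ξ i ^ 2

/-- `ψ` touches `U` from above at `p` within `D`. -/
def TouchAbove {n : ℕ} (ψ U : Pt n → ℝ) (D : Set (Pt n)) (p : Pt n) : Prop :=
  ψ p = U p ∧ ∃ E : Set (Pt n), IsOpen E ∧ Convex ℝ E ∧ p ∈ E ∧ ∀ q ∈ E ∩ D, U q ≤ ψ q

/-- `ψ` touches `U` from below at `p` within `D`. -/
def TouchBelow {n : ℕ} (ψ U : Pt n → ℝ) (D : Set (Pt n)) (p : Pt n) : Prop :=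
  ψ p = U p ∧ ∃ E : Set (Pt n), IsOpen E ∧ Convex ℝ E ∧ p ∈ E ∧ ∀ q ∈ E ∩ D, ψ q ≤ U q

/-- `f` admits a continuous extension to the closure of `D`. -/
def ExtCont {n : ℕ} (f : Pt n → ℝ) (D : Set (Pt n)) : Prop :=
  ∃ g : Pt n → ℝ, ContinuousOn g (closure D) ∧ EqOn f g D

/-- The test class `C_s` on an (open, upper) region `D`. -/
def MemCs {n : ℕ} (s : ℝ) (D : Set (Pt n)) (ψ : Pt n → ℝ) : Prop :=
  ContDiffOn ℝ 2 ψ D ∧ ExtCont ψ D ∧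
  (∀ i, ExtCont (fun p => pX ψ p i) D) ∧
  (∀ i j, ExtCont (fun p => pXX ψ p i j) D) ∧
  ExtCont (pZ ψ) D ∧
  ExtCont (fun p => |p.2| ^ (2 - 1 / s) * pZZ ψ p) D ∧
  ∀ p ∈ closure D, p.2 = 0 →
    ∃ L, HasDerivWithinAt (fun t => ψ (p.1, t)) L (Ici (0 : ℝ)) 0 ∧
      Tendsto (pZ ψ) (𝓝[D] p) (𝓝 L)

/-- `C_s`-viscosity subsolution of `a^{ij}∂_{ij}U + |z|^{2-1/s}∂_{zz}U = F` in `D`,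
`∂_z U = f` on the flat part `T ⊂ {z = 0}`. -/
def ViscSub {n : ℕ} (s : ℝ) (a : Euc n → Fin n → Fin n → ℝ) (F : Pt n → ℝ) (f : Euc n → ℝ)
    (D T : Set (Pt n)) (U : Pt n → ℝ) : Prop :=
  (∀ ψ : Pt n → ℝ, ContDiffOn ℝ 2 ψ D → ∀ p ∈ D, TouchAbove ψ U D p → F p ≤ AOp s a ψ p) ∧
  (∀ ψ : Pt n → ℝ, MemCs s (D ∩ {q : Pt n | 0 < q.2}) ψ → ∀ p ∈ T,
    TouchAbove ψ U ((D ∩ {q : Pt n | 0 < q.2}) ∪ T) p →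
    ∀ L, HasDerivWithinAt (fun t => ψ (p.1, t)) L (Ici (0 : ℝ)) 0 → f p.1 ≤ L)

/-- `C_s`-viscosity supersolution. -/
def ViscSuper {n : ℕ} (s : ℝ) (a : Euc n → Fin n → Fin n → ℝ) (F : Pt n → ℝ) (f : Euc n → ℝ)
    (D T : Set (Pt n)) (U : Pt n → ℝ) : Prop :=
  (∀ ψ : Pt n → ℝ, ContDiffOn ℝ 2 ψ D → ∀ p ∈ D, TouchBelow ψ U D p → AOp s a ψ p ≤ F p) ∧
  (∀ ψ : Pt n → ℝ, MemCs s (D ∩ {q : Pt n | 0 < q.2}) ψ → ∀ p ∈ T,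
    TouchBelow ψ U ((D ∩ {q : Pt n | 0 < q.2}) ∪ T) p →
    ∀ L, HasDerivWithinAt (fun t => ψ (p.1, t)) L (Ici (0 : ℝ)) 0 → L ≤ f p.1)

/-- `C_s`-viscosity solution. -/
def ViscSol {n : ℕ} (s : ℝ) (a : Euc n → Fin n → Fin n → ℝ) (F : Pt n → ℝ) (f : Euc n → ℝ)
    (D T : Set (Pt n)) (U : Pt n → ℝ) : Prop :=
  ViscSub s a F f D T U ∧ ViscSuper s a F f D T U

/-- `C_s`-viscosity solution of the reflected problem on a region `S` symmetric across `{z=0}`: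
the equation holds in `S ∩ {z ≠ 0}` and the Neumann condition on `S ∩ {z = 0}`. -/
def ViscSolRefl {n : ℕ} (s : ℝ) (a : Euc n → Fin n → Fin n → ℝ) (F : Pt n → ℝ) (f : Euc n → ℝ)
    (S : Set (Pt n)) (U : Pt n → ℝ) : Prop :=
  ViscSub s a F f (S ∩ {p : Pt n | p.2 ≠ 0}) (S ∩ {p : Pt n | p.2 = 0}) U ∧
  ViscSuper s a F f (S ∩ {p : Pt n | p.2 ≠ 0}) (S ∩ {p : Pt n | p.2 = 0}) U

/-- The upper half-cylinder `S_r(0) × (S_ρ(0))⁺ ⊂ ℝⁿ × ℝ`. -/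
def cylUp (n : ℕ) (s r ρ : ℝ) : Set (Pt n) := secX r (0 : Euc n) ×ˢ (secH s ρ 0 ∩ Ioi (0 : ℝ))

/-- The flat piece `T_r = S_r(0) × {0}`. -/
def Tflat (n : ℕ) (r : ℝ) : Set (Pt n) := secX r (0 : Euc n) ×ˢ ({0} : Set ℝ)

/-- Upper half of the unit section of `Φ` in ℝⁿ⁺¹. -/
def Dupper (n : ℕ) (s : ℝ) : Set (Pt n) :=
  secPhi s 1 ((0 : Euc n), (0 : ℝ)) ∩ {p : Pt n | 0 < p.2}

/-- Flat part of the unit section of `Φ`. -/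
def Tzero (n : ℕ) (s : ℝ) : Set (Pt n) :=
  secPhi s 1 ((0 : Euc n), (0 : ℝ)) ∩ {p : Pt n | p.2 = 0}

/-- Oscillation of `H` on `A`. -/
def oscOn {n : ℕ} (H : Pt n → ℝ) (A : Set (Pt n)) : ℝ := sSup (H '' A) - sInf (H '' A)

/-- Norm of the `k`-th derivative in the `x` variables. -/
def DxkNorm {n : ℕ} (k : ℕ) (H : Pt n → ℝ) (p : Pt n) : ℝ :=
  ‖iteratedFDeriv ℝ k (fun x => H (x, p.2)) p.1‖

/-- Classical solution of `Δ_x H + z^{2−1/s}∂_{zz}H = 0` in `D`, `∂_z H = 0` on `T`. -/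
def ClassicalHarm (n : ℕ) (s : ℝ) (D T : Set (Pt n)) (H : Pt n → ℝ) : Prop :=
  ContDiffOn ℝ 2 H D ∧ ContinuousOn H (D ∪ T) ∧
  (∀ p ∈ D, (∑ i, pXX H p i i) + |p.2| ^ (2 - 1 / s) * pZZ H p = 0) ∧
  (∀ p ∈ T, HasDerivWithinAt (fun t => H (p.1, t)) 0 (Ici (0 : ℝ)) 0)

/-- Contact set obtained by sliding Monge–Ampère paraboloids of opening `a` with vertices in
`B` from below until they touch the graph of `U` over `K`. -/
def contactSet {n : ℕ} (s a : ℝ) (U : Pt n → ℝ) (K B : Set (Pt n)) : Set (Pt n) :=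
  {p | p ∈ K ∧ ∃ v ∈ B, ∀ q ∈ K, U p + a * deltaPhi s v p ≤ U q + a * deltaPhi s v q}

/-- **Lemma 4.2 (first characterization of the viscosity Neumann condition):** for the
subsolution (touching from above) condition, requiring `∂_zψ(x₀,0) ≥ f(x₀)` for every `C_s`
test function is equivalent to requiring, for every `C_s` test function, that either the
operator value at `(x₀,0)` is at least `F(x₀,0)` or `∂_zψ(x₀,0) ≥ f(x₀)`. -/
theorem neumann_characterization_one (n : ℕ) (hn : 1 ≤ n) (s lam Lam : ℝ)
    (hs0 : 0 < s) (hs1 : s < 1) (hlam : 0 < lam) (hLam : lam ≤ Lam)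
    (a : Euc n → Fin n → Fin n → ℝ) (f : Euc n → ℝ) (F : Pt n → ℝ) (U : Pt n → ℝ)
    (ha : IsElliptic lam Lam a (secX 1 (0 : Euc n)))
    (hf : ContinuousOn f (secX 1 (0 : Euc n)))
    (hF : ContinuousOn F (Dupper n s ∪ Tzero n s))
    (hU : ContinuousOn U (closure (Dupper n s))) :
    (∀ ψ : Pt n → ℝ, MemCs s (Dupper n s) ψ → ∀ p ∈ Tzero n s,
        TouchAbove ψ U (Dupper n s ∪ Tzero n s) p →
        ∀ L : ℝ, HasDerivWithinAt (fun t => ψ (p.1, t)) L (Ici (0 : ℝ)) 0 → f p.1 ≤ L)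
    ↔
    (∀ ψ : Pt n → ℝ, MemCs s (Dupper n s) ψ → ∀ p ∈ Tzero n s,
        TouchAbove ψ U (Dupper n s ∪ Tzero n s) p →
        ∀ M : ℝ,
          Tendsto (fun q => (∑ i, ∑ j, a p.1 i j * pXX ψ q i j) +
            |q.2| ^ (2 - 1 / s) * pZZ ψ q) (𝓝[Dupper n s] p) (𝓝 M) →
        ∀ L : ℝ, HasDerivWithinAt (fun t => ψ (p.1, t)) L (Ici (0 : ℝ)) 0 →
          (F p ≤ M ∨ f p.1 ≤ L)) := by

  constructor
  · intro h ψ hψ p hp htouch M hM L hL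
    exact Or.inr (h ψ hψ p hp htouch L hL)
  · intro h ψ hψ p hp htouch L hL
    -- exponent facts
    have hr1 : (1:ℝ) < 1/s := one_lt_one_div hs0 hs1
    have hr0 : (0:ℝ) < 1/s := by linarith
    have hrm1 : (0:ℝ) < 1/s - 1 := by linarith
    have hkappa : (0:ℝ) < (1/s) * (1/s - 1) := mul_pos hr0 hrm1
    -- p is on the flat part
    have hpz : p.2 = 0 := hp.2
    -- Dupper is open
    have hH : Continuous fun z : ℝ => deltaH s 0 z := by
      unfold deltaH hfun
      exact ((continuous_const.mul (continuous_abs.rpow_const fun z =>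
        Or.inr hr0.le)).sub continuous_const).sub
        (continuous_const.mul (continuous_id.sub continuous_const))
    have hX : Continuous fun x : Euc n => deltaX (0:Euc n) x := by
      unfold deltaX
      exact ((continuous_id.sub continuous_const).norm.pow 2).div_const 2
    have hopen : IsOpen (Dupper n s) := by
      apply IsOpen.inter
      · exact isOpen_lt ((hX.comp continuous_fst).add (hH.comp continuous_snd))
          continuous_const
      · exact isOpen_lt continuous_const continuous_snd
    have hDpos : ∀ q ∈ Dupper n s, (0:ℝ) < q.2 := fun q hq => hq.2
    -- destructure MemCs of ψ
    have hψfull := hψ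
    obtain ⟨hC2, hExt, hEpX, hEpXX, hEpZ, hEpZZ, hBdry⟩ := hψ
    choose g4 hg4c hg4e using hEpXX
    obtain ⟨g5, hg5c, hg5e⟩ := hEpZ
    obtain ⟨g6, hg6c, hg6e⟩ := hEpZZ
    by_cases hpc : p ∈ closure (Dupper n s)
    swap
    · -- trivial case: the filter is ⊥
      have hbot : 𝓝[Dupper n s] p = ⊥ := by
        rw [← not_neBot]
        rw [mem_closure_iff_nhdsWithin_neBot] at hpc
        exact hpc
      have := h ψ hψfull p hp htouch (F p - 1) (by rw [hbot]; exact tendsto_bot) L hL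
      rcases this with h1 | h2
      · linarith
      · exact h2
    -- main case
    refine le_of_forall_pos_le_add fun ε hε => ?_
    set M0 : ℝ := (∑ i, ∑ j, a p.1 i j * g4 i j p) + g6 p with hM0def
    set K : ℝ := max 1 ((M0 - F p)/((1/s) * (1/s - 1)) + 1) with hKdef
    have hK1 : (1:ℝ) ≤ K := le_max_left _ _
    have hK0 : (0:ℝ) < K := lt_of_lt_of_le one_pos hK1
    have hKbig : M0 - K * ((1/s) * (1/s - 1)) < F p := by
      have h1 : (M0 - F p)/((1/s) * (1/s - 1)) + 1 ≤ K := le_max_right _ _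
      have h2 : ((M0 - F p)/((1/s) * (1/s - 1))) * ((1/s) * (1/s - 1)) = M0 - F p :=
        div_mul_cancel₀ _ (ne_of_gt hkappa)
      nlinarith [mul_le_mul_of_nonneg_right h1 hkappa.le]
    -- the correction function
    set cc : ℝ → ℝ := fun t => ε * t - K * (max t 0) ^ (1/s) with hccdef
    set ψε : Pt n → ℝ := fun q => ψ q + cc q.2 with hψεdef
    have hcc0 : cc 0 = 0 := by
      rw [hccdef]
      show ε * 0 - K * (max (0:ℝ) 0) ^ (1/s) = 0
      rw [max_self, Real.zero_rpow (ne_of_gt hr0)]; ring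
    have hccEv : ∀ t : ℝ, 0 < t →
        cc =ᶠ[𝓝 t] fun t' => ε * t' - K * t' ^ (1/s) := by
      intro t ht
      filter_upwards [Ioi_mem_nhds ht] with t' ht'
      simp [hccdef, max_eq_left (le_of_lt (show (0:ℝ) < t' from ht'))]
    have hccD : ∀ t : ℝ, 0 < t →
        HasDerivAt cc (ε - K * ((1/s) * t ^ (1/s - 1))) t := by
      intro t ht
      have h1 := (Real.hasDerivAt_rpow_const (p := 1/s)
        (Or.inl (ne_of_gt ht))).const_mul K
      have h2 := ((hasDerivAt_id t).const_mul ε).sub h1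
      have h3 : ε * 1 - K * ((1/s) * t ^ (1/s - 1)) = ε - K * ((1/s) * t ^ (1/s - 1)) := by
        ring
      rw [h3] at h2
      exact h2.congr_of_eventuallyEq (hccEv t ht)
    have hccD2 : ∀ t : ℝ, 0 < t →
        HasDerivAt (fun t' : ℝ => ε - K * ((1/s) * t' ^ (1/s - 1)))
          (-(K * ((1/s) * ((1/s - 1) * t ^ (1/s - 2))))) t := by
      intro t ht
      have h1 := ((Real.hasDerivAt_rpow_const (p := 1/s - 1)
        (Or.inl (ne_of_gt ht))).const_mul (1/s)).const_mul K
      have h2 := (hasDerivAt_const t ε).sub h1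
      have h3 : (0:ℝ) - K * ((1/s) * ((1/s - 1) * t ^ (1/s - 1 - 1)))
          = -(K * ((1/s) * ((1/s - 1) * t ^ (1/s - 2)))) := by
        rw [show (1/s - 1 - 1 : ℝ) = 1/s - 2 by ring]; ring
      rw [h3] at h2
      exact h2
    -- pointwise equality of x-derivatives
    have F1 : ∀ (q : Pt n) (i : Fin n), pX ψε q i = pX ψ q i := by
      intro q i
      show fderiv ℝ (fun x => ψ (x, q.2) + cc q.2) q.1 (basisVec i)
        = fderiv ℝ (fun x => ψ (x, q.2)) q.1 (basisVec i)
      rw [fderiv_add_const]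
    have F2 : ∀ (q : Pt n) (i j : Fin n), pXX ψε q i j = pXX ψ q i j := by
      intro q i j
      show fderiv ℝ (fun x => pX ψε (x, q.2) j) q.1 (basisVec i)
        = fderiv ℝ (fun x => pX ψ (x, q.2) j) q.1 (basisVec i)
      rw [show (fun x => pX ψε (x, q.2) j) = (fun x => pX ψ (x, q.2) j) from
        funext fun x => F1 (x, q.2) j]
    -- z-derivatives inside Dupper
    have key : ∀ q ∈ Dupper n s,
        pZ ψε q = pZ ψ q + (ε - K * ((1/s) * q.2 ^ (1/s - 1))) ∧
        pZZ ψε q = pZZ ψ q - K * ((1/s) * ((1/s - 1) * q.2 ^ (1/s - 2))) := by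
      intro q hq
      have hqz : (0:ℝ) < q.2 := hq.2
      have hV : IsOpen {t : ℝ | (q.1, t) ∈ Dupper n s} :=
        hopen.preimage (Continuous.prodMk_right q.1)
      have hqV : q.2 ∈ {t : ℝ | (q.1, t) ∈ Dupper n s} := by
        show (q.1, q.2) ∈ Dupper n s
        rw [Prod.mk.eta]
        exact hq
      have hslC : ∀ t ∈ {t : ℝ | (q.1, t) ∈ Dupper n s},
          ContDiffAt ℝ 2 (fun t' => ψ (q.1, t')) t := by
        intro t ht
        exact ContDiffAt.comp t (hC2.contDiffAt (hopen.mem_nhds ht))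
          (ContDiffAt.prodMk contDiffAt_const contDiffAt_id)
      constructor
      · show deriv (fun t => ψ (q.1, t) + cc t) q.2 = _
        rw [deriv_fun_add ((hslC q.2 hqV).differentiableAt two_ne_zero)
          (hccD q.2 hqz).differentiableAt, (hccD q.2 hqz).deriv]
        rfl
      · have hEv : (fun t => deriv (fun t' => ψ (q.1, t') + cc t') t)
            =ᶠ[𝓝 q.2] (fun t => deriv (fun t' => ψ (q.1, t')) t
              + (ε - K * ((1/s) * t ^ (1/s - 1)))) := by
          filter_upwards [hV.mem_nhds hqV] with t ht
          have htpos : (0:ℝ) < t := (hDpos _ ht)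
          rw [deriv_fun_add ((hslC t ht).differentiableAt two_ne_zero)
            (hccD t htpos).differentiableAt, (hccD t htpos).deriv]
        have hD1 : DifferentiableAt ℝ (deriv (fun t' => ψ (q.1, t'))) q.2 := by
          have hVC : ContDiffOn ℝ 2 (fun t' => ψ (q.1, t'))
              {t : ℝ | (q.1, t) ∈ Dupper n s} :=
            fun t ht => (hslC t ht).contDiffWithinAt
          have hD : ContDiffOn ℝ 1 (deriv (fun t' => ψ (q.1, t')))
              {t : ℝ | (q.1, t) ∈ Dupper n s} :=
            hVC.deriv_of_isOpen hV (by norm_num)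
          exact ((hD.differentiableOn one_ne_zero).differentiableAt (hV.mem_nhds hqV))
        show deriv (fun t => deriv (fun t' => ψ (q.1, t') + cc t') t) q.2 = _
        rw [hEv.deriv_eq, deriv_fun_add hD1 (hccD2 q.2 hqz).differentiableAt,
          (hccD2 q.2 hqz).deriv]
        show deriv (deriv (fun t' => ψ (q.1, t'))) q.2 + _ = pZZ ψ q - _
        have : pZZ ψ q = deriv (deriv (fun t' => ψ (q.1, t'))) q.2 := rfl
        rw [this]; ring
    -- weighted second derivative identity on Dupper
    have hwt : ∀ q ∈ Dupper n s,
        |q.2| ^ (2 - 1/s) * pZZ ψε q = g6 q - K * ((1/s) * (1/s - 1)) := by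
      intro q hq
      have hqz : (0:ℝ) < q.2 := hq.2
      have hA : q.2 ^ (2 - 1/s) * q.2 ^ (1/s - 2) = 1 := by
        rw [← Real.rpow_add hqz]
        norm_num
      have h6 : |q.2| ^ (2 - 1/s) * pZZ ψ q = g6 q := hg6e hq
      rw [abs_of_pos hqz] at h6
      rw [(key q hq).2, abs_of_pos hqz]
      linear_combination h6 - K * (1/s * (1/s - 1)) * hA
    -- ψε is in the class C_s
    have hmemcs : MemCs s (Dupper n s) ψε := by
      refine ⟨?_, ?_, ?_, ?_, ?_, ?_, ?_⟩
      · -- ContDiffOn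
        apply ContDiffOn.add hC2
        have base : ContDiffOn ℝ 2 (fun q : Pt n => ε * q.2 - K * q.2 ^ (1/s))
            (Dupper n s) := by
          apply ContDiffOn.sub
          · exact (contDiff_const.mul contDiff_snd).contDiffOn
          · apply ContDiffOn.mul contDiffOn_const
            intro q hq
            exact (ContDiffAt.comp q
              (Real.contDiffAt_rpow_const_of_ne (ne_of_gt (hDpos q hq)))
              contDiffAt_snd).contDiffWithinAt
        apply base.congr
        intro q hq
        simp [hccdef, max_eq_left (hDpos q hq).le]
      · -- ExtCont ψε
        obtain ⟨gψ, hgψc, hgψe⟩ := hExt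
        have hccC : Continuous cc := by
          apply Continuous.sub (continuous_const.mul continuous_id)
          exact continuous_const.mul
            ((continuous_id.max continuous_const).rpow_const fun t => Or.inr hr0.le)
        exact ⟨fun q => gψ q + cc q.2,
          hgψc.add (hccC.comp continuous_snd).continuousOn,
          fun q hq => by simp [hψεdef, hgψe hq]⟩
      · intro i
        obtain ⟨g3, hg3c, hg3e⟩ := hEpX i
        refine ⟨g3, hg3c, fun q hq => ?_⟩
        show pX ψε q i = g3 q
        rw [F1 q i]
        exact hg3e hq
      · intro i j
        refine ⟨g4 i j, hg4c i j, fun q hq => ?_⟩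
        show pXX ψε q i j = g4 i j q
        rw [F2 q i j]
        exact hg4e i j hq
      · -- ExtCont pZ
        have hcor : Continuous fun q : Pt n => ε - K * ((1/s) * (max q.2 0) ^ (1/s - 1)) :=
          continuous_const.sub (continuous_const.mul (continuous_const.mul
            ((continuous_snd.max continuous_const).rpow_const fun q => Or.inr hrm1.le)))
        refine ⟨fun q => g5 q + (ε - K * ((1/s) * (max q.2 0) ^ (1/s - 1))),
          hg5c.add hcor.continuousOn, fun q hq => ?_⟩
        show pZ ψε q = g5 q + (ε - K * ((1/s) * (max q.2 0) ^ (1/s - 1)))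
        rw [(key q hq).1, hg5e hq, max_eq_left (hDpos q hq).le]
      · -- ExtCont weighted pZZ
        refine ⟨fun q => g6 q - K * ((1/s) * (1/s - 1)),
          hg6c.sub continuousOn_const, fun q hq => ?_⟩
        exact hwt q hq
      · -- boundary derivative clause
        intro p' hp' hz'
        obtain ⟨L0, hL0, hT0⟩ := hBdry p' hp' hz'
        refine ⟨L0 + ε, ?_, ?_⟩
        · have hccDW : HasDerivWithinAt cc ε (Ici (0:ℝ)) 0 := by
            have hb : HasDerivAt (fun t : ℝ => ε * t - K * t ^ (1/s))
                (ε * 1 - K * ((1/s) * (0:ℝ) ^ (1/s - 1))) 0 :=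
              ((hasDerivAt_id (0:ℝ)).const_mul ε).sub
                ((Real.hasDerivAt_rpow_const (p := 1/s) (Or.inr hr1.le)).const_mul K)
            rw [Real.zero_rpow (by positivity : (1/s - 1 : ℝ) ≠ 0)] at hb
            have hb2 : HasDerivAt (fun t : ℝ => ε * t - K * t ^ (1/s)) ε 0 := by
              convert hb using 1; ring
            exact hb2.hasDerivWithinAt.congr
              (fun t ht => by simp [hccdef, max_eq_left (mem_Ici.mp ht)])
              (by simp [hccdef, max_eq_left (le_refl (0:ℝ))])
          exact hL0.add hccDW
        · have hz2 : Tendsto (fun q : Pt n => q.2) (𝓝[Dupper n s] p') (𝓝 0) := by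
            have h0 := (continuous_snd.tendsto p').mono_left
              (nhdsWithin_le_nhds (s := Dupper n s))
            rw [hz'] at h0
            exact h0
          have hrp : Tendsto (fun q : Pt n => q.2 ^ (1/s - 1))
              (𝓝[Dupper n s] p') (𝓝 0) := by
            have hc := Real.continuousAt_rpow_const 0 (1/s - 1) (Or.inr hrm1.le)
            have := hc.tendsto.comp hz2
            rw [Real.zero_rpow (ne_of_gt hrm1)] at this
            exact this
          have hcor : Tendsto (fun q : Pt n => ε - K * ((1/s) * q.2 ^ (1/s - 1)))
              (𝓝[Dupper n s] p') (𝓝 ε) := by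
            have hmul : Tendsto (fun q : Pt n => K * ((1/s) * q.2 ^ (1/s - 1)))
                (𝓝[Dupper n s] p') (𝓝 (K * ((1/s) * (0:ℝ)))) :=
              tendsto_const_nhds.mul (tendsto_const_nhds.mul hrp)
            have hsub : Tendsto (fun q : Pt n => ε - K * ((1/s) * q.2 ^ (1/s - 1)))
                (𝓝[Dupper n s] p') (𝓝 (ε - K * ((1/s) * (0:ℝ)))) :=
              tendsto_const_nhds.sub hmul
            simpa using hsub
          have hsum := hT0.add hcor
          apply hsum.congr'
          filter_upwards [eventually_mem_nhdsWithin] with q hq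
          exact ((key q hq).1).symm
    -- ψε touches U from above at p
    obtain ⟨heq, E, hEo, hEc, hpE, hEle⟩ := htouch
    have ht0pos : (0:ℝ) < (ε/K) ^ (1/(1/s - 1)) :=
      Real.rpow_pos_of_pos (div_pos hε hK0) _
    have hccnn : ∀ t : ℝ, 0 ≤ t → t < (ε/K) ^ (1/(1/s - 1)) → 0 ≤ cc t := by
      intro t ht0 htt
      rcases eq_or_lt_of_le ht0 with hteq | htpos
      · rw [← hteq, hcc0]
      · have h1 : t ^ (1/s - 1) ≤ ε/K := by
          have hle : t ^ (1/s - 1) ≤ ((ε/K) ^ (1/(1/s - 1))) ^ (1/s - 1) :=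
            Real.rpow_le_rpow ht0 htt.le hrm1.le
          have hpow : ((ε/K) ^ (1/(1/s - 1))) ^ (1/s - 1) = ε/K := by
            rw [← Real.rpow_mul (div_pos hε hK0).le,
              one_div_mul_cancel (ne_of_gt hrm1), Real.rpow_one]
          rw [hpow] at hle
          exact hle
        have hts : t * t ^ (1/s - 1) = t ^ (1/s) := by
          rw [Real.rpow_sub htpos, Real.rpow_one]
          field_simp
        have h2 : K * t ^ (1/s - 1) ≤ ε := by
          have := mul_le_mul_of_nonneg_left h1 hK0.le
          rwa [mul_div_cancel₀ ε (ne_of_gt hK0)] at this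
        have : cc t = t * (ε - K * t ^ (1/s - 1)) := by
          rw [hccdef]
          simp only
          rw [max_eq_left ht0, ← hts]; ring
        rw [this]
        have hnn : 0 ≤ ε - K * t ^ (1/s - 1) := by linarith
        positivity
    have htouchε : TouchAbove ψε U (Dupper n s ∪ Tzero n s) p := by
      refine ⟨by rw [hψεdef]; simp only; rw [hpz, hcc0, add_zero]; exact heq,
        E ∩ {q : Pt n | q.2 < (ε/K) ^ (1/(1/s - 1))},
        hEo.inter (isOpen_lt continuous_snd continuous_const),
        hEc.inter (convex_halfSpace_lt ⟨fun _ _ => rfl, fun _ _ => rfl⟩ _),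
        ⟨hpE, by simp only [mem_setOf_eq]; rw [hpz]; exact ht0pos⟩, ?_⟩
      intro q hq
      have hU2 : U q ≤ ψ q := hEle q ⟨hq.1.1, hq.2⟩
      have hq0 : (0:ℝ) ≤ q.2 := by
        rcases hq.2 with hqD | hqT
        · exact (hDpos q hqD).le
        · rw [hqT.2]
      have := hccnn q.2 hq0 hq.1.2
      rw [hψεdef]
      simp only
      linarith
    -- the operator limit
    have hGc : ContinuousOn (fun q : Pt n => (∑ i, ∑ j, a p.1 i j * g4 i j q)
        + (g6 q - K * ((1/s) * (1/s - 1)))) (closure (Dupper n s)) := by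
      apply ContinuousOn.add
      · apply continuousOn_finset_sum
        intro i _
        apply continuousOn_finset_sum
        intro j _
        exact continuousOn_const.mul (hg4c i j)
      · exact hg6c.sub continuousOn_const
    have hOpTend : Tendsto (fun q : Pt n => (∑ i, ∑ j, a p.1 i j * pXX ψε q i j)
        + |q.2| ^ (2 - 1/s) * pZZ ψε q) (𝓝[Dupper n s] p)
        (𝓝 (M0 - K * ((1/s) * (1/s - 1)))) := by
      have hT : Tendsto (fun q : Pt n => (∑ i, ∑ j, a p.1 i j * g4 i j q)
          + (g6 q - K * ((1/s) * (1/s - 1)))) (𝓝[Dupper n s] p)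
          (𝓝 ((∑ i, ∑ j, a p.1 i j * g4 i j p) + (g6 p - K * ((1/s) * (1/s - 1))))) :=
        (hGc p hpc).mono_left (nhdsWithin_mono p subset_closure)
      have hMq : M0 - K * ((1/s) * (1/s - 1)) = (∑ i, ∑ j, a p.1 i j * g4 i j p)
          + (g6 p - K * ((1/s) * (1/s - 1))) := by
        rw [hM0def]; ring
      rw [hMq]
      apply hT.congr'
      filter_upwards [eventually_mem_nhdsWithin] with q hq
      congr 1
      · apply Finset.sum_congr rfl
        intro i _
        apply Finset.sum_congr rfl
        intro j _
        have h4 : pXX ψ q i j = g4 i j q := hg4e i j hq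
        rw [F2 q i j, h4]
      · exact (hwt q hq).symm
    -- the derivative of ψε at p
    have hderivε : HasDerivWithinAt (fun t => ψε (p.1, t)) (L + ε) (Ici (0:ℝ)) 0 := by
      have hccDW : HasDerivWithinAt cc ε (Ici (0:ℝ)) 0 := by
        have hb : HasDerivAt (fun t : ℝ => ε * t - K * t ^ (1/s))
            (ε * 1 - K * ((1/s) * (0:ℝ) ^ (1/s - 1))) 0 :=
          ((hasDerivAt_id (0:ℝ)).const_mul ε).sub
            ((Real.hasDerivAt_rpow_const (p := 1/s) (Or.inr hr1.le)).const_mul K)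
        rw [Real.zero_rpow (by positivity : (1/s - 1 : ℝ) ≠ 0)] at hb
        have hb2 : HasDerivAt (fun t : ℝ => ε * t - K * t ^ (1/s)) ε 0 := by
          convert hb using 1; ring
        exact hb2.hasDerivWithinAt.congr
          (fun t ht => by simp [hccdef, max_eq_left (mem_Ici.mp ht)])
          (by simp [hccdef, max_eq_left (le_refl (0:ℝ))])
      exact hL.add hccDW
    -- apply the hypothesis
    have happ := h ψε hmemcs p hp htouchε (M0 - K * ((1/s) * (1/s - 1)))
      hOpTend (L + ε) hderivε
    rcases happ with h1 | h2
    · exfalso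
      linarith
    · exact h2
end
end

section
/- Classical solutions versus viscosity solutions (Lemma 4.4): Let S₁⁺ = S₁(0,0) ∩ {z > 0}, T₁ = S₁(0,0) ∩ {z = 0}, let a^{ij} be bounded measurable symmetric uniformly elliptic coefficients, f ∈ C(T₁), F ∈ C(S₁⁺). If U ∈ C²(S₁⁺) ∩ C¹(closure of S₁⁺) satisfies pointwise a^{ij}(x)∂_{ij}U + z^{2−1/s}∂_{zz}U ≥ F in S₁⁺ and ∂_zU ≥ f on T₁ (respectively with ≤ in both), then U is a C_s-viscosity subsolution (respectively supersolution). Conversely, if U ∈ C²(S₁⁺) ∩ C¹(closure of S₁⁺) is a C_s-viscosity subsolution (respectively supersolution), then the pointwise inequalities a^{ij}(x)∂_{ij}U + z^{2−1/s}∂_{zz}U ≥ F in S₁⁺ and ∂_zU ≥ f on T₁ hold (respectively with ≤). -/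
open Set Filter Topology MeasureTheory
open scoped RealInnerProductSpace

noncomputable section

lemma deriv_nonneg_of_eventually_nonneg {g : ℝ → ℝ} {d : ℝ}
    (hg : HasDerivWithinAt g d (Ici (0:ℝ)) 0) (h0 : g 0 = 0)
    (hpos : ∀ᶠ t in 𝓝[>] (0:ℝ), 0 ≤ g t) : 0 ≤ d := by
  have hslope : Tendsto (slope g 0) (𝓝[>] (0:ℝ)) (𝓝 d) := by
    have := hasDerivWithinAt_iff_tendsto_slope.1 hg
    refine this.mono_left (nhdsWithin_mono _ ?_)
    intro t ht
    exact ⟨le_of_lt (show (0:ℝ) < t from ht), ne_of_gt (show (0:ℝ) < t from ht)⟩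
  refine le_of_tendsto_of_tendsto tendsto_const_nhds hslope ?_
  filter_upwards [hpos, self_mem_nhdsWithin] with t ht ht'
  rw [slope_def_field]
  have h : (0:ℝ) < t := ht'
  simp only [h0, sub_zero]
  positivity

lemma second_deriv_nonneg_of_isLocalMin {g G : ℝ → ℝ} {m : ℝ}
    (hg : ∀ᶠ t in 𝓝 (0:ℝ), HasDerivAt g (G t) t)
    (hG : HasDerivAt G m 0) (hmin : IsLocalMin g 0) : 0 ≤ m := by
  by_contra hneg
  push_neg at hneg
  have hG0 : G 0 = 0 := hmin.hasDerivAt_eq_zero (hg.self_of_nhds)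
  have hslope : Tendsto (slope G 0) (𝓝[>] (0:ℝ)) (𝓝 m) :=
    (hasDerivAt_iff_tendsto_slope.1 hG).mono_left
      (nhdsWithin_mono _ (fun t ht => ne_of_gt ht))
  have hGneg : ∀ᶠ t in 𝓝[>] (0:ℝ), G t < 0 := by
    filter_upwards [hslope.eventually_lt_const hneg, self_mem_nhdsWithin] with t ht ht'
    have h : (0:ℝ) < t := ht'
    rw [slope_def_field, hG0, sub_zero, sub_zero, div_neg_iff] at ht
    rcases ht with ⟨h1, h2⟩ | ⟨h1, h2⟩
    · linarith
    · exact h1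
  obtain ⟨u, hu, huG⟩ := mem_nhdsGT_iff_exists_Ioo_subset.1 hGneg
  have hball : ∀ᶠ t in 𝓝 (0:ℝ), HasDerivAt g (G t) t ∧ g 0 ≤ g t := hg.and hmin
  obtain ⟨δ, hδpos, hδ⟩ := Metric.eventually_nhds_iff_ball.1 hball
  have hu' : (0:ℝ) < u := hu
  set t₀ : ℝ := min u δ / 2 with ht₀def
  have ht₀pos : (0:ℝ) < t₀ := by positivity
  have ht₀u : t₀ < u := by
    have := min_le_left u δ; simp only [ht₀def]; linarith [lt_min hu' hδpos]
  have ht₀δ : t₀ < δ := by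
    have := min_le_right u δ; simp only [ht₀def]; linarith [lt_min hu' hδpos]
  have hmem : ∀ t ∈ Icc (0:ℝ) t₀, t ∈ Metric.ball (0:ℝ) δ := fun t ht => by
    rw [Metric.mem_ball, Real.dist_eq, sub_zero, abs_lt]
    exact ⟨by linarith [ht.1], by linarith [ht.2]⟩
  have hcont : ContinuousOn g (Icc 0 t₀) := fun t ht =>
    ((hδ t (hmem t ht)).1.continuousAt).continuousWithinAt
  have hderiv : ∀ t ∈ Ioo (0:ℝ) t₀, HasDerivAt g (G t) t := fun t ht =>
    (hδ t (hmem t ⟨le_of_lt ht.1, le_of_lt ht.2⟩)).1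
  obtain ⟨c, hc, hceq⟩ := exists_hasDerivAt_eq_slope g G ht₀pos hcont hderiv
  have hGc : G c < 0 := huG ⟨hc.1, lt_trans hc.2 ht₀u⟩
  have hle : g 0 ≤ g t₀ := (hδ t₀ (hmem t₀ ⟨le_of_lt ht₀pos, le_refl _⟩)).2
  rw [hceq, sub_zero] at hGc
  have := div_nonneg (by linarith : (0:ℝ) ≤ g t₀ - g 0) (le_of_lt ht₀pos)
  linarith


/-- From `ContDiffAt ℝ 2`, the function is eventually differentiable with derivative `deriv g`,
and `deriv g` is differentiable at the point. -/
lemma contDiffAt_two_deriv {g : ℝ → ℝ} {t₀ : ℝ} (hg : ContDiffAt ℝ 2 g t₀) :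
    (∀ᶠ t in 𝓝 t₀, HasDerivAt g (deriv g t) t) ∧
      HasDerivAt (deriv g) (deriv (deriv g) t₀) t₀ := by
  obtain ⟨u, hu, hcd⟩ := hg.contDiffOn (le_refl 2) (by simp)
  obtain ⟨v, hvo, hv, hvu⟩ := mem_nhds_iff.1 hu
  have hcdv : ContDiffOn ℝ 2 g v := hcd.mono hvo
  have h2 : ContDiffOn ℝ (1+1) g v := by norm_num; exact hcdv
  rw [contDiffOn_succ_iff_deriv_of_isOpen hv] at h2
  have hdiff : ∀ t ∈ v, HasDerivAt g (deriv g t) t := fun t ht =>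
    (h2.1 t ht).differentiableAt (hv.mem_nhds ht) |>.hasDerivAt
  have hdd : DifferentiableOn ℝ (deriv g) v := h2.2.2.differentiableOn (by norm_num)
  refine ⟨eventually_of_mem (hv.mem_nhds hvu) hdiff, ?_⟩
  exact (hdd t₀ hvu).differentiableAt (hv.mem_nhds hvu) |>.hasDerivAt

lemma second_deriv_nonneg_of_isLocalMin' {g : ℝ → ℝ} {t₀ : ℝ}
    (hg : ContDiffAt ℝ 2 g t₀) (hmin : IsLocalMin g t₀) : 0 ≤ deriv (deriv g) t₀ := by
  obtain ⟨hev, hdd⟩ := contDiffAt_two_deriv hg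
  have htr : Tendsto (fun t : ℝ => t₀ + t) (𝓝 0) (𝓝 t₀) := by
    simpa using (continuous_add_left t₀).tendsto (0:ℝ)
  refine second_deriv_nonneg_of_isLocalMin (g := fun t => g (t₀ + t))
    (G := fun t => deriv g (t₀ + t)) (m := deriv (deriv g) t₀) ?_ ?_ ?_
  · filter_upwards [htr.eventually hev] with t ht
    have hlin : HasDerivAt (fun u : ℝ => t₀ + u) 1 t := by
      simpa using (hasDerivAt_id t).const_add t₀
    simpa [Function.comp_def] using ht.comp t hlin
  · have hlin : HasDerivAt (fun u : ℝ => t₀ + u) 1 (0:ℝ) := by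
      simpa using (hasDerivAt_id (0:ℝ)).const_add t₀
    have hdd' : HasDerivAt (deriv g) (deriv (deriv g) t₀) (t₀ + 0) := by simpa using hdd
    simpa [Function.comp_def] using hdd'.comp (0:ℝ) hlin
  · unfold IsLocalMin IsMinFilter at hmin ⊢
    filter_upwards [htr.eventually hmin] with t ht
    simpa using ht



lemma euc_decomp {n : ℕ} (v : Euc n) :
    v = ∑ j, v j • EuclideanSpace.single j (1:ℝ) := by
  apply PiLp.ext
  intro i
  rw [WithLp.ofLp_sum, Finset.sum_apply]
  simp [EuclideanSpace.single_apply]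

lemma line_contDiff {n : ℕ} (x₀ v : Euc n) :
    ContDiff ℝ 2 (fun t : ℝ => x₀ + t • v) :=
  contDiff_const.add (contDiff_id.smul contDiff_const)

lemma line_hasDerivAt {n : ℕ} (x₀ v : Euc n) (t : ℝ) :
    HasDerivAt (fun t : ℝ => x₀ + t • v) v t := by
  simpa using ((hasDerivAt_id t).smul_const v).const_add x₀

/-- Directional second derivative of a `C²` function at a local minimum is nonnegative. -/
lemma dir_hess_nonneg {n : ℕ} {φ : Euc n → ℝ} {x₀ : Euc n}
    (hφ : ContDiffAt ℝ 2 φ x₀) (hmin : IsLocalMin φ x₀) (v : Euc n) :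
    0 ≤ fderiv ℝ (fun x => fderiv ℝ φ x v) x₀ v := by
  set L : ℝ → Euc n := fun t => x₀ + t • v with hL
  have hL0 : L 0 = x₀ := by simp [hL]
  have hLcont : Tendsto L (𝓝 0) (𝓝 x₀) :=
    hL0 ▸ ((line_contDiff x₀ v).continuous.tendsto (0:ℝ))
  -- eventual HasDerivAt for g = φ ∘ L
  obtain ⟨u, hu, hcd⟩ := hφ.contDiffOn (le_refl 2) (by simp)
  obtain ⟨O, hOu, hOopen, hx₀O⟩ := mem_nhds_iff.1 hu
  have hdiff : ∀ y ∈ O, HasFDerivAt φ (fderiv ℝ φ y) y := fun y hy =>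
    (((hcd.mono hOu).differentiableOn (by norm_num)) y hy).differentiableAt
      (hOopen.mem_nhds hy) |>.hasFDerivAt
  have hev : ∀ᶠ t in 𝓝 (0:ℝ), HasDerivAt (fun t => φ (L t)) (fderiv ℝ φ (L t) v) t := by
    filter_upwards [hLcont.eventually (hOopen.mem_nhds hx₀O)] with t ht
    exact (hdiff (L t) ht).comp_hasDerivAt t (line_hasDerivAt x₀ v t)
  -- derivative of G at 0
  have hG1 : ContDiffAt ℝ 1 (fun x => fderiv ℝ φ x v) x₀ :=
    (hφ.fderiv_right (by norm_num)).clm_apply contDiffAt_const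
  have hGd : DifferentiableAt ℝ (fun x => fderiv ℝ φ x v) x₀ := hG1.differentiableAt (by norm_num)
  have hG : HasDerivAt (fun t => fderiv ℝ φ (L t) v)
      (fderiv ℝ (fun x => fderiv ℝ φ x v) x₀ v) 0 := by
    have hF : HasFDerivAt (fun x => fderiv ℝ φ x v)
        (fderiv ℝ (fun x => fderiv ℝ φ x v) x₀) (L 0) := hL0 ▸ hGd.hasFDerivAt
    exact hF.comp_hasDerivAt 0 (line_hasDerivAt x₀ v 0)
  have hmin' : IsLocalMin (fun t => φ (L t)) 0 := by
    unfold IsLocalMin IsMinFilter at hmin ⊢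
    filter_upwards [hLcont.eventually hmin] with t ht
    simpa [hL0] using ht
  exact second_deriv_nonneg_of_isLocalMin hev hG hmin'




/-- Expansion of the second derivative quadratic form in coordinates. -/
lemma hess_expand {n : ℕ} {φ : Euc n → ℝ} {x₀ : Euc n}
    (hφ : ContDiffAt ℝ 2 φ x₀) (v : Euc n) :
    fderiv ℝ (fun x => fderiv ℝ φ x v) x₀ v =
      ∑ i, ∑ j, v i * v j *
        fderiv ℝ (fun x => fderiv ℝ φ x (EuclideanSpace.single j (1:ℝ))) x₀
          (EuclideanSpace.single i (1:ℝ)) := by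
  set E : Fin n → Euc n := fun j => EuclideanSpace.single j (1:ℝ) with hE
  have hdiffj : ∀ j, DifferentiableAt ℝ (fun x => fderiv ℝ φ x (E j)) x₀ := fun j =>
    (((hφ.fderiv_right (m := 1) (by norm_num)).clm_apply contDiffAt_const).differentiableAt (by norm_num))
  have h1 : (fun x => fderiv ℝ φ x v) = (fun x => ∑ j, v j * fderiv ℝ φ x (E j)) := by
    funext x
    conv_lhs => rw [euc_decomp v]
    rw [map_sum]
    exact Finset.sum_congr rfl (fun j _ => by rw [_root_.map_smul]; rfl
    )
  rw [h1]
  have h2 : fderiv ℝ (fun x => ∑ j, v j * fderiv ℝ φ x (E j)) x₀ =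
      ∑ j, v j • fderiv ℝ (fun x => fderiv ℝ φ x (E j)) x₀ := by
    rw [fderiv_fun_sum (fun j _ => (hdiffj j).const_mul (v j))]
    exact Finset.sum_congr rfl (fun j _ => fderiv_const_mul (hdiffj j) (v j))
  rw [h2]
  rw [ContinuousLinearMap.sum_apply]
  rw [Finset.sum_comm]
  refine Finset.sum_congr rfl (fun j _ => ?_)
  rw [ContinuousLinearMap.smul_apply]
  have h3 : fderiv ℝ (fun x => fderiv ℝ φ x (E j)) x₀ v =
      ∑ i, v i * fderiv ℝ (fun x => fderiv ℝ φ x (E j)) x₀ (E i) := by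
    conv_lhs => rw [euc_decomp v]
    rw [map_sum]
    exact Finset.sum_congr rfl (fun i _ => by rw [_root_.map_smul]; rfl)
  rw [h3, smul_eq_mul, Finset.mul_sum]
  exact Finset.sum_congr rfl (fun i _ => by ring)

/-- For a symmetric positive semidefinite `A` and a matrix `H` with nonnegative quadratic
form, the Frobenius pairing is nonnegative. -/
lemma trace_pair_nonneg {n : ℕ} (A H : Fin n → Fin n → ℝ)
    (hAs : ∀ i j, A i j = A j i)
    (hA : ∀ ξ : Fin n → ℝ, 0 ≤ ∑ i, ∑ j, A i j * ξ i * ξ j)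
    (hH : ∀ ξ : Fin n → ℝ, 0 ≤ ∑ i, ∑ j, ξ i * ξ j * H i j) :
    0 ≤ ∑ i, ∑ j, A i j * H i j := by
  classical
  set MA : Matrix (Fin n) (Fin n) ℝ := Matrix.of A with hMA
  have hpsd : MA.PosSemidef := by
    refine Matrix.PosSemidef.of_dotProduct_mulVec_nonneg ?_ ?_
    · ext i j
      simp [Matrix.conjTranspose_apply, hMA, hAs i j]
    · intro x
      have := hA x
      simp only [dotProduct, Matrix.mulVec, star_trivial]
      refine this.trans_eq ?_
      symm
      · show ∑ i, x i * ∑ j, A i j * x j = _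
        simp only [Finset.mul_sum]
        exact Finset.sum_congr rfl (fun i _ => Finset.sum_congr rfl (fun j _ => by ring))
  obtain ⟨S, hSsym, hSS⟩ : ∃ S : Matrix (Fin n) (Fin n) ℝ,
      (∀ i j, S i j = S j i) ∧ ∀ i j, A i j = ∑ k, S i k * S j k := by
    open scoped MatrixOrder in
    have hsa : IsSelfAdjoint (CFC.sqrt MA) := IsSelfAdjoint.of_nonneg (CFC.sqrt_nonneg MA)
    open scoped MatrixOrder in
    have hmul : CFC.sqrt MA * CFC.sqrt MA = MA := CFC.sqrt_mul_sqrt_self MA hpsd.nonneg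
    have hs : ∀ i j, CFC.sqrt MA i j = CFC.sqrt MA j i := fun i j => by
      have h2 := congrFun (congrFun hsa i) j
      simpa [Matrix.star_apply] using h2.symm
    refine ⟨CFC.sqrt MA, hs, fun i j => ?_⟩
    have h := congrFun (congrFun hmul i) j
    rw [Matrix.mul_apply] at h
    have hAij : A i j = MA i j := rfl
    rw [hAij, ← h]
    exact Finset.sum_congr rfl (fun k _ => by rw [hs k j])
  calc (0:ℝ) ≤ ∑ k, ∑ i, ∑ j, (S i k) * (S j k) * H i j :=
        Finset.sum_nonneg (fun k _ => hH (fun i => S i k))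
    _ = ∑ i, ∑ j, A i j * H i j := by
        rw [Finset.sum_comm]
        refine Finset.sum_congr rfl (fun i _ => ?_)
        rw [Finset.sum_comm]
        refine Finset.sum_congr rfl (fun j _ => ?_)
        rw [hSS i j, Finset.sum_mul]


/-- Sum rule for the second derivative of 1D functions. -/
lemma second_deriv_add {g h : ℝ → ℝ} {t₀ : ℝ}
    (hg : ContDiffAt ℝ 2 g t₀) (hh : ContDiffAt ℝ 2 h t₀) :
    deriv (deriv (fun t => g t + h t)) t₀ = deriv (deriv g) t₀ + deriv (deriv h) t₀ := by
  obtain ⟨hgev, hgdd⟩ := contDiffAt_two_deriv hg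
  obtain ⟨hhev, hhdd⟩ := contDiffAt_two_deriv hh
  have hev : (fun t => deriv (fun u => g u + h u) t) =ᶠ[𝓝 t₀]
      (fun t => deriv g t + deriv h t) := by
    filter_upwards [hgev, hhev] with t htg hth
    exact (htg.add hth).deriv
  rw [hev.deriv_eq]
  exact deriv_add hgdd.differentiableAt hhdd.differentiableAt

lemma pZZ_add {n : ℕ} {U w : Pt n → ℝ} {p : Pt n}
    (hU : ContDiffAt ℝ 2 (fun t => U (p.1, t)) p.2)
    (hw : ContDiffAt ℝ 2 (fun t => w (p.1, t)) p.2) :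
    pZZ (fun q => U q + w q) p = pZZ U p + pZZ w p := by
  have : pZZ (fun q => U q + w q) p
      = deriv (deriv (fun t => U (p.1, t) + w (p.1, t))) p.2 := rfl
  rw [this, second_deriv_add hU hw]
  rfl

/-- `x`-slice of a `ContDiffAt` function on `Pt n` is `ContDiffAt`. -/
lemma xslice_contDiffAt {n : ℕ} {f : Pt n → ℝ} {p : Pt n}
    (hf : ContDiffAt ℝ 2 f p) : ContDiffAt ℝ 2 (fun x => f (x, p.2)) p.1 := by
  have : ContDiffAt ℝ 2 (fun x : Euc n => (x, p.2)) p.1 :=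
    (contDiff_id.prodMk contDiff_const).contDiffAt
  exact ContDiffAt.comp p.1 (by simpa using hf) this

lemma zslice_contDiffAt {n : ℕ} {f : Pt n → ℝ} {p : Pt n}
    (hf : ContDiffAt ℝ 2 f p) : ContDiffAt ℝ 2 (fun t => f (p.1, t)) p.2 := by
  have : ContDiffAt ℝ 2 (fun t : ℝ => ((p.1 : Euc n), t)) p.2 :=
    (contDiff_const.prodMk contDiff_id).contDiffAt
  exact ContDiffAt.comp p.2 (by simpa using hf) this

lemma pXX_eq {n : ℕ} (f : Pt n → ℝ) (p : Pt n) (i j : Fin n) :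
    pXX f p i j =
      fderiv ℝ (fun x => fderiv ℝ (fun y => f (y, p.2)) x (basisVec j)) p.1 (basisVec i) := rfl

lemma pXX_add {n : ℕ} {U w : Pt n → ℝ} {p : Pt n}
    (hU : ContDiffAt ℝ 2 U p) (hw : ContDiffAt ℝ 2 w p) (i j : Fin n) :
    pXX (fun q => U q + w q) p i j = pXX U p i j + pXX w p i j := by
  have hUs := xslice_contDiffAt hU
  have hws := xslice_contDiffAt hw
  -- the functions `x ↦ pX _ (x,p.2) j` agree near `p.1` with the sum of fderivs
  obtain ⟨uU, huU, hcdU⟩ := hU.contDiffOn (le_refl 2) (by simp)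
  obtain ⟨uw, huw, hcdw⟩ := hw.contDiffOn (le_refl 2) (by simp)
  have hevset : ∀ᶠ x in 𝓝 p.1, (x, p.2) ∈ interior uU ∩ interior uw := by
    have hc : ContinuousAt (fun x : Euc n => (x, p.2)) p.1 :=
      (continuous_id.prodMk continuous_const).continuousAt
    apply hc.eventually_mem
    have h1 : (p.1, p.2) ∈ interior uU ∩ interior uw :=
      ⟨mem_interior_iff_mem_nhds.2 huU, mem_interior_iff_mem_nhds.2 huw⟩
    have h2 : p = (p.1, p.2) := rfl
    exact (IsOpen.mem_nhds (isOpen_interior.inter isOpen_interior) (h2 ▸ h1))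
  have hev : (fun x => fderiv ℝ (fun y => (fun q => U q + w q) (y, p.2)) x (basisVec j))
      =ᶠ[𝓝 p.1] (fun x => fderiv ℝ (fun y => U (y, p.2)) x (basisVec j)
        + fderiv ℝ (fun y => w (y, p.2)) x (basisVec j)) := by
    filter_upwards [hevset] with x hx
    have hdU : DifferentiableAt ℝ (fun y => U (y, p.2)) x := by
      have : ContDiffAt ℝ 2 U (x, p.2) :=
        (hcdU.mono interior_subset).contDiffAt (isOpen_interior.mem_nhds hx.1)
      exact (xslice_contDiffAt (p := (x, p.2)) this).differentiableAt (by norm_num)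
    have hdw : DifferentiableAt ℝ (fun y => w (y, p.2)) x := by
      have : ContDiffAt ℝ 2 w (x, p.2) :=
        (hcdw.mono interior_subset).contDiffAt (isOpen_interior.mem_nhds hx.2)
      exact (xslice_contDiffAt (p := (x, p.2)) this).differentiableAt (by norm_num)
    rw [fderiv_fun_add hdU hdw]
    rfl
  rw [pXX_eq, pXX_eq, pXX_eq, hev.fderiv_eq]
  have hdU' : DifferentiableAt ℝ
      (fun x => fderiv ℝ (fun y => U (y, p.2)) x (basisVec j)) p.1 :=
    ((hUs.fderiv_right (m := 1) (by norm_num)).clm_apply contDiffAt_const).differentiableAt (by norm_num)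
  have hdw' : DifferentiableAt ℝ
      (fun x => fderiv ℝ (fun y => w (y, p.2)) x (basisVec j)) p.1 :=
    ((hws.fderiv_right (m := 1) (by norm_num)).clm_apply contDiffAt_const).differentiableAt (by norm_num)
  rw [fderiv_fun_add hdU' hdw']
  rfl

/-- Interior comparison at a touching point. -/
lemma AOp_le_of_localMin {n : ℕ} {s : ℝ} {a : Euc n → Fin n → Fin n → ℝ}
    {U ψ : Pt n → ℝ} {p : Pt n}
    (hAs : ∀ i j, a p.1 i j = a p.1 j i)
    (hAq : ∀ ξ : Fin n → ℝ, 0 ≤ ∑ i, ∑ j, a p.1 i j * ξ i * ξ j)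
    (hU : ContDiffAt ℝ 2 U p) (hψ : ContDiffAt ℝ 2 ψ p)
    (hmin : IsLocalMin (fun q => ψ q - U q) p) :
    AOp s a U p ≤ AOp s a ψ p := by
  set w : Pt n → ℝ := fun q => ψ q - U q with hwdef
  have hw : ContDiffAt ℝ 2 w p := hψ.sub hU
  have hψU : ψ = fun q => U q + w q := by funext q; simp [hwdef]
  -- z part
  have hminz : IsLocalMin (fun t => w (p.1, t)) p.2 := by
    unfold IsLocalMin IsMinFilter at hmin ⊢
    have hc : ContinuousAt (fun t : ℝ => ((p.1 : Euc n), t)) p.2 :=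
      (continuous_const.prodMk continuous_id).continuousAt
    have h2 : p = (p.1, p.2) := rfl
    filter_upwards [hc.eventually (h2 ▸ hmin)] with t ht
    simpa using ht
  have hzz : 0 ≤ pZZ w p :=
    second_deriv_nonneg_of_isLocalMin' (zslice_contDiffAt hw) hminz
  have hpzz : pZZ ψ p = pZZ U p + pZZ w p := by
    rw [hψU]; exact pZZ_add (zslice_contDiffAt hU) (zslice_contDiffAt hw)
  -- x part
  have hminx : IsLocalMin (fun x => w (x, p.2)) p.1 := by
    unfold IsLocalMin IsMinFilter at hmin ⊢
    have hc : ContinuousAt (fun x : Euc n => (x, p.2)) p.1 :=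
      (continuous_id.prodMk continuous_const).continuousAt
    have h2 : p = (p.1, p.2) := rfl
    filter_upwards [hc.eventually (h2 ▸ hmin)] with x hx
    simpa using hx
  have hws := xslice_contDiffAt hw
  have hHq : ∀ ξ : Fin n → ℝ, 0 ≤ ∑ i, ∑ j, ξ i * ξ j * pXX w p i j := by
    intro ξ
    set v : Euc n := (WithLp.equiv 2 (Fin n → ℝ)).symm ξ with hv
    have hvj : ∀ j, v j = ξ j := fun j => rfl
    have h1 := dir_hess_nonneg hws hminx v
    rw [hess_expand hws v] at h1
    calc (0:ℝ) ≤ ∑ i, ∑ j, v i * v j *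
          fderiv ℝ (fun x => fderiv ℝ (fun y => w (y, p.2)) x
            (EuclideanSpace.single j (1:ℝ))) p.1 (EuclideanSpace.single i (1:ℝ)) := h1
      _ = ∑ i, ∑ j, ξ i * ξ j * pXX w p i j := by
          refine Finset.sum_congr rfl (fun i _ => Finset.sum_congr rfl (fun j _ => ?_))
          rw [hvj i, hvj j, pXX_eq]
          rfl
  have hxpart : 0 ≤ ∑ i, ∑ j, a p.1 i j * pXX w p i j :=
    trace_pair_nonneg (a p.1) (fun i j => pXX w p i j) hAs hAq hHq
  have hpxx : ∀ i j, pXX ψ p i j = pXX U p i j + pXX w p i j := fun i j => by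
    rw [hψU]; exact pXX_add hU hw i j
  -- combine
  unfold AOp
  have hsum : ∑ i, ∑ j, a p.1 i j * pXX ψ p i j
      = (∑ i, ∑ j, a p.1 i j * pXX U p i j) + ∑ i, ∑ j, a p.1 i j * pXX w p i j := by
    rw [← Finset.sum_add_distrib]
    refine Finset.sum_congr rfl (fun i _ => ?_)
    rw [← Finset.sum_add_distrib]
    refine Finset.sum_congr rfl (fun j _ => ?_)
    rw [hpxx i j]; ring
  rw [hsum, hpzz]
  have hzfac : (0:ℝ) ≤ |p.2| ^ (2 - 1/s) := Real.rpow_nonneg (abs_nonneg _) _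
  nlinarith [mul_nonneg hzfac hzz]


section Geometry

variable {n : ℕ} {s : ℝ}

lemma hfun_zero (hs0 : 0 < s) : hfun s 0 = 0 := by
  have h : (1:ℝ)/s ≠ 0 := ne_of_gt (by positivity)
  unfold hfun
  rw [abs_zero, Real.zero_rpow h, mul_zero]

lemma hfun_nonneg (hs0 : 0 < s) (hs1 : s < 1) (z : ℝ) : 0 ≤ hfun s z := by
  unfold hfun
  have h1 : (0:ℝ) < 1 - s := by linarith
  positivity

lemma hder_zero : hder s 0 = 0 := by simp [hder]

lemma deltaH_zero_left (hs0 : 0 < s) (z : ℝ) : deltaH s 0 z = hfun s z := by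
  unfold deltaH
  rw [hfun_zero hs0, hder_zero, sub_zero, zero_mul, sub_zero]

lemma hfun_continuous (hs0 : 0 < s) : Continuous (fun z : ℝ => hfun s z) := by
  unfold hfun
  refine continuous_const.mul ?_
  rw [continuous_iff_continuousAt]
  intro z
  exact (Real.continuousAt_rpow_const _ _ (Or.inr (by positivity))).comp
    continuous_abs.continuousAt

lemma hfun_mono (hs0 : 0 < s) (hs1 : s < 1) {t t' : ℝ} (h0 : 0 ≤ t) (h : t ≤ t') :
    hfun s t ≤ hfun s t' := by
  unfold hfun
  have h1 : (0:ℝ) < 1 - s := by linarith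
  refine mul_le_mul_of_nonneg_left ?_ (by positivity)
  exact Real.rpow_le_rpow (abs_nonneg _) (by rw [abs_of_nonneg h0, abs_of_nonneg (le_trans h0 h)]; exact h) (by positivity)

lemma mem_Dupper_iff (hs0 : 0 < s) {q : Pt n} :
    q ∈ Dupper n s ↔ ‖q.1‖^2/2 + hfun s q.2 < 1 ∧ 0 < q.2 := by
  unfold Dupper secPhi deltaPhi deltaX
  simp only [mem_inter_iff, mem_setOf_eq, sub_zero, deltaH_zero_left hs0]

lemma mem_Tzero_iff (hs0 : 0 < s) {q : Pt n} :
    q ∈ Tzero n s ↔ ‖q.1‖^2/2 < 1 ∧ q.2 = 0 := by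
  unfold Tzero secPhi deltaPhi deltaX
  simp only [mem_inter_iff, mem_setOf_eq, sub_zero, deltaH_zero_left hs0]
  constructor
  · rintro ⟨h1, h2⟩
    rw [h2, hfun_zero hs0, add_zero] at h1
    exact ⟨h1, h2⟩
  · rintro ⟨h1, h2⟩
    refine ⟨?_, h2⟩
    rw [h2, hfun_zero hs0, add_zero]
    exact h1

lemma isOpen_Dupper (hs0 : 0 < s) : IsOpen (Dupper n s) := by
  have h1 : IsOpen (secPhi s 1 ((0 : Euc n), (0:ℝ))) := by
    have hc : Continuous (fun q : Pt n => deltaPhi s ((0:Euc n), (0:ℝ)) q) := by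
      have h1 : Continuous fun q : Pt n => ‖q.1 - (0:Euc n)‖^2/2 :=
        ((continuous_fst.sub continuous_const).norm.pow 2).div_const 2
      have h2 : Continuous fun q : Pt n => hfun s q.2 :=
        (hfun_continuous hs0).comp continuous_snd
      have h3 : (fun q : Pt n => deltaPhi s ((0:Euc n),(0:ℝ)) q)
          = fun q => ‖q.1 - (0:Euc n)‖^2/2 + hfun s q.2 := by
        funext q; unfold deltaPhi deltaX; rw [deltaH_zero_left hs0]
      rw [h3]; exact h1.add h2
    exact isOpen_lt hc continuous_const
  exact h1.inter (isOpen_lt continuous_const continuous_snd)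

lemma Dupper_inter_pos : Dupper n s ∩ {q : Pt n | 0 < q.2} = Dupper n s := by
  apply inter_eq_self_of_subset_left
  intro q hq
  exact hq.2

lemma seg_mem_Dupper (hs0 : 0 < s) (hs1 : s < 1) {x : Euc n} {z t : ℝ}
    (h : (x, z) ∈ Dupper n s) (ht : 0 < t) (htz : t ≤ z) : (x, t) ∈ Dupper n s := by
  rw [mem_Dupper_iff hs0] at h ⊢
  exact ⟨lt_of_le_of_lt (by
    have := hfun_mono hs0 hs1 (le_of_lt ht) htz
    simp only
    linarith) h.1, ht⟩

lemma base_mem_closure_Dupper (hs0 : 0 < s) (hs1 : s < 1) {x : Euc n}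
    (hx : ‖x‖^2/2 < 1) : ((x, (0:ℝ)) : Pt n) ∈ closure (Dupper n s) := by
  have hne : (𝓝[>] (0:ℝ)).NeBot := nhdsGT_neBot 0
  refine mem_closure_of_tendsto (f := fun t : ℝ => ((x, t) : Pt n)) (b := 𝓝[>] (0:ℝ)) ?_ ?_
  · exact Tendsto.mono_left ((Continuous.tendsto (by continuity) 0)) nhdsWithin_le_nhds
  · have hcont : ContinuousAt (fun t : ℝ => hfun s t) 0 := (hfun_continuous hs0).continuousAt
    have h0 : hfun s 0 = 0 := hfun_zero hs0
    have hev : ∀ᶠ t in 𝓝 (0:ℝ), hfun s t < 1 - ‖x‖^2/2 :=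
      hcont.eventually_lt continuousAt_const
        (show hfun s 0 < 1 - ‖x‖^2/2 by rw [h0]; linarith)
    filter_upwards [eventually_nhdsWithin_of_eventually_nhds hev, self_mem_nhdsWithin] with t h1 h2
    rw [mem_Dupper_iff hs0]
    exact ⟨by linarith, h2⟩

lemma mem_secX_of_Dupper (hs0 : 0 < s) (hs1 : s < 1) {q : Pt n} (h : q ∈ Dupper n s) :
    q.1 ∈ secX 1 (0 : Euc n) := by
  rw [mem_Dupper_iff hs0] at h
  have := hfun_nonneg hs0 hs1 q.2
  unfold secX deltaX
  simp only [mem_setOf_eq, sub_zero]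
  linarith [h.1]

lemma mem_secX_of_Tzero (hs0 : 0 < s) {q : Pt n} (h : q ∈ Tzero n s) :
    q.1 ∈ secX 1 (0 : Euc n) := by
  rw [mem_Tzero_iff hs0] at h
  unfold secX deltaX
  simp only [mem_setOf_eq, sub_zero]
  exact h.1

/-- A `C²` function has a derivative in `z` equal to `pZ`. -/
lemma slice_hasDerivAt_pZ {f : Pt n → ℝ} {q : Pt n} (hf : ContDiffAt ℝ 2 f q) :
    HasDerivAt (fun t => f (q.1, t)) (pZ f q) q.2 :=
  ((zslice_contDiffAt hf).differentiableAt (by norm_num)).hasDerivAt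

end Geometry


section Negation

variable {n : ℕ} {s : ℝ}

lemma pX_neg (f : Pt n → ℝ) (p : Pt n) (i : Fin n) :
    pX (fun q => -f q) p i = -pX f p i := by
  unfold pX
  have : (fun x : Euc n => -f (x, p.2)) = fun x => -(fun y : Euc n => f (y, p.2)) x := rfl
  rw [this, fderiv_fun_neg]
  rfl

lemma pXX_neg (f : Pt n → ℝ) (p : Pt n) (i j : Fin n) :
    pXX (fun q => -f q) p i j = -pXX f p i j := by
  unfold pXX
  have h1 : (fun x : Euc n => pX (fun q => -f q) (x, p.2) j)
      = fun x => -(fun y : Euc n => pX f (y, p.2) j) x := by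
    funext x; exact pX_neg f (x, p.2) j
  rw [h1, fderiv_fun_neg]
  rfl

lemma pZ_neg (f : Pt n → ℝ) (p : Pt n) : pZ (fun q => -f q) p = -pZ f p := by
  unfold pZ
  have : (fun t => -f (p.1, t)) = fun t => -(fun t' => f (p.1, t')) t := rfl
  rw [this, deriv.fun_neg]

lemma pZZ_neg (f : Pt n → ℝ) (p : Pt n) : pZZ (fun q => -f q) p = -pZZ f p := by
  unfold pZZ
  have h1 : (fun t => deriv (fun t' => -f (p.1, t')) t)
      = fun t => -(fun u => deriv (fun t' => f (p.1, t')) u) t := by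
    funext t
    have : (fun t' => -f (p.1, t')) = fun t' => -(fun u => f (p.1, u)) t' := rfl
    rw [this, deriv.fun_neg]
  rw [h1, deriv.fun_neg]

lemma AOp_neg (a : Euc n → Fin n → Fin n → ℝ) (f : Pt n → ℝ) (p : Pt n) :
    AOp s a (fun q => -f q) p = -AOp s a f p := by
  unfold AOp
  rw [pZZ_neg]
  have : ∀ i j, a p.1 i j * pXX (fun q => -f q) p i j = -(a p.1 i j * pXX f p i j) :=
    fun i j => by rw [pXX_neg]; ring
  simp only [this, Finset.sum_neg_distrib]
  ring

lemma ExtCont.neg {f : Pt n → ℝ} {D : Set (Pt n)} (h : ExtCont f D) :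
    ExtCont (fun q => -f q) D := by
  obtain ⟨g, hg, heq⟩ := h
  exact ⟨fun q => -g q, hg.neg, fun q hq => by simp [heq hq]⟩

lemma ExtCont.congr {f g : Pt n → ℝ} {D : Set (Pt n)} (h : ExtCont f D)
    (heq : ∀ q, f q = g q) : ExtCont g D := by
  obtain ⟨G, hG, hfG⟩ := h
  exact ⟨G, hG, fun q hq => by rw [← heq q]; exact hfG hq⟩

lemma MemCs.neg {D : Set (Pt n)} {ψ : Pt n → ℝ} (h : MemCs s D ψ) :
    MemCs s D (fun q => -ψ q) := by
  obtain ⟨h1, h2, h3, h4, h5, h6, h7⟩ := h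
  refine ⟨h1.neg, h2.neg, fun i => (h3 i).neg.congr (fun q => (pX_neg ψ q i).symm),
    fun i j => (h4 i j).neg.congr (fun q => (pXX_neg ψ q i j).symm),
    h5.neg.congr (fun q => (pZ_neg ψ q).symm),
    h6.neg.congr (fun q => by rw [pZZ_neg]; ring), ?_⟩
  intro p hp hp2
  obtain ⟨L, hL, htend⟩ := h7 p hp hp2
  refine ⟨-L, hL.neg, ?_⟩
  have : pZ (fun q => -ψ q) = fun q => -pZ ψ q := by funext q; exact pZ_neg ψ q
  rw [this]
  exact htend.neg

lemma touchAbove_neg {ψ U : Pt n → ℝ} {D : Set (Pt n)} {p : Pt n}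
    (h : TouchBelow ψ U D p) : TouchAbove (fun q => -ψ q) (fun q => -U q) D p := by
  obtain ⟨heq, E, hE1, hE2, hE3, hE4⟩ := h
  exact ⟨by simp [heq], E, hE1, hE2, hE3, fun q hq => by simp [hE4 q hq]⟩

lemma touchBelow_neg {ψ U : Pt n → ℝ} {D : Set (Pt n)} {p : Pt n}
    (h : TouchAbove ψ U D p) : TouchBelow (fun q => -ψ q) (fun q => -U q) D p := by
  obtain ⟨heq, E, hE1, hE2, hE3, hE4⟩ := h
  exact ⟨by simp [heq], E, hE1, hE2, hE3, fun q hq => by simp [hE4 q hq]⟩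

/-- `ViscSuper` for `U` is `ViscSub` for `-U` (with negated data). -/
lemma viscSuper_of_viscSub_neg {a : Euc n → Fin n → Fin n → ℝ} {F : Pt n → ℝ}
    {f : Euc n → ℝ} {D T : Set (Pt n)} {U : Pt n → ℝ}
    (h : ViscSub s a (fun p => -F p) (fun x => -f x) D T (fun q => -U q)) :
    ViscSuper s a F f D T U := by
  obtain ⟨h1, h2⟩ := h
  constructor
  · intro ψ hψ p hp htouch
    have h := h1 (fun q => -ψ q) hψ.neg p hp (touchAbove_neg htouch)
    rw [AOp_neg] at h
    have h' : -F p ≤ -AOp s a ψ p := h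
    linarith
  · intro ψ hψ p hp htouch L hL
    have h := h2 (fun q => -ψ q) hψ.neg p hp (touchAbove_neg htouch) (-L) hL.neg
    have h' : -f p.1 ≤ -L := h
    linarith

end Negation


section Quadratic

variable {n : ℕ} {s : ℝ}

/-- The quadratic test function `q ↦ A + C‖q.1-c‖² + B·q.2`. -/
def quadFn (A B C : ℝ) (c : Euc n) : Pt n → ℝ :=
  fun q => A + C * ‖q.1 - c‖^2 + B * q.2

lemma quadFn_base_contDiff (A C : ℝ) (c : Euc n) :
    ContDiff ℝ 2 (fun x : Euc n => A + C * ‖x - c‖^2) :=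
  contDiff_const.add (contDiff_const.mul
    (((contDiff_norm_sq ℝ).comp (contDiff_id.sub contDiff_const))))

lemma quadFn_contDiff (A B C : ℝ) (c : Euc n) : ContDiff ℝ 2 (quadFn A B C c) := by
  unfold quadFn
  exact (((quadFn_base_contDiff A C c).comp contDiff_fst)).add
    (contDiff_const.mul contDiff_snd)

lemma quadFn_pX (A B C : ℝ) (c : Euc n) (p : Pt n) (i : Fin n) :
    pX (quadFn A B C c) p i
      = fderiv ℝ (fun x : Euc n => A + C * ‖x - c‖^2) p.1 (basisVec i) := by
  unfold pX quadFn
  congr 1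
  exact fderiv_add_const (B * p.2)

lemma quadFn_pXX (A B C : ℝ) (c : Euc n) (p : Pt n) (i j : Fin n) :
    pXX (quadFn A B C c) p i j
      = fderiv ℝ (fun x : Euc n =>
          fderiv ℝ (fun y : Euc n => A + C * ‖y - c‖^2) x (basisVec j)) p.1 (basisVec i) := by
  unfold pXX
  have h : (fun x : Euc n => pX (quadFn A B C c) (x, p.2) j)
      = fun x : Euc n =>
          fderiv ℝ (fun y : Euc n => A + C * ‖y - c‖^2) x (basisVec j) := by
    funext x; exact quadFn_pX A B C c (x, p.2) j
  rw [h]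

lemma quadFn_zslice (A B C : ℝ) (c : Euc n) (x : Euc n) (t : ℝ) :
    HasDerivAt (fun u => quadFn A B C c (x, u)) B t := by
  unfold quadFn
  simpa using ((hasDerivAt_id t).const_mul B).const_add (A + C * ‖x - c‖^2)

lemma quadFn_pZ (A B C : ℝ) (c : Euc n) (p : Pt n) : pZ (quadFn A B C c) p = B :=
  (quadFn_zslice A B C c p.1 p.2).deriv

lemma quadFn_pZZ (A B C : ℝ) (c : Euc n) (p : Pt n) : pZZ (quadFn A B C c) p = 0 := by
  unfold pZZ
  have h1 : (fun t => deriv (fun t' => quadFn A B C c (p.1, t')) t) = fun _ => B := by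
    funext t; exact (quadFn_zslice A B C c p.1 t).deriv
  rw [h1]
  exact deriv_const _ _

lemma quadFn_memCs (A B C : ℝ) (c : Euc n) (D : Set (Pt n)) :
    MemCs s D (quadFn A B C c) := by
  have hcd := quadFn_contDiff (n := n) A B C c
  have hΨ := quadFn_base_contDiff (n := n) A C c
  refine ⟨hcd.contDiffOn, ⟨_, hcd.continuous.continuousOn, fun _ _ => rfl⟩, ?_, ?_, ?_, ?_, ?_⟩
  · intro i
    refine ⟨fun p => pX (quadFn A B C c) p i, ?_, fun _ _ => rfl⟩
    have : Continuous fun p : Pt n =>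
        fderiv ℝ (fun x : Euc n => A + C * ‖x - c‖^2) p.1 (basisVec i) :=
      ((hΨ.continuous_fderiv (by norm_num)).comp continuous_fst).clm_apply continuous_const
    have heq : (fun p : Pt n => pX (quadFn A B C c) p i) = fun p =>
        fderiv ℝ (fun x : Euc n => A + C * ‖x - c‖^2) p.1 (basisVec i) := by
      funext p; exact quadFn_pX A B C c p i
    rw [heq]
    exact this.continuousOn
  · intro i j
    refine ⟨fun p => pXX (quadFn A B C c) p i j, ?_, fun _ _ => rfl⟩
    have h1 : ContDiff ℝ 1 (fun x : Euc n =>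
        fderiv ℝ (fun y : Euc n => A + C * ‖y - c‖^2) x (basisVec j)) :=
      (hΨ.fderiv_right (by norm_num)).clm_apply contDiff_const
    have : Continuous fun p : Pt n =>
        fderiv ℝ (fun x : Euc n =>
          fderiv ℝ (fun y : Euc n => A + C * ‖y - c‖^2) x (basisVec j)) p.1 (basisVec i) :=
      ((h1.continuous_fderiv (by norm_num)).comp continuous_fst).clm_apply continuous_const
    have heq : (fun p : Pt n => pXX (quadFn A B C c) p i j) = fun p =>
        fderiv ℝ (fun x : Euc n =>
          fderiv ℝ (fun y : Euc n => A + C * ‖y - c‖^2) x (basisVec j)) p.1 (basisVec i) := by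
      funext p; exact quadFn_pXX A B C c p i j
    rw [heq]
    exact this.continuousOn
  · refine ⟨fun _ => B, continuous_const.continuousOn, fun p _ => quadFn_pZ A B C c p⟩
  · refine ⟨fun _ => 0, continuous_const.continuousOn, fun p _ => ?_⟩
    show |p.2| ^ (2 - 1/s) * pZZ (quadFn A B C c) p = 0
    rw [quadFn_pZZ A B C c p, mul_zero]
  · intro p _ _
    refine ⟨B, (quadFn_zslice A B C c p.1 0).hasDerivWithinAt, ?_⟩
    have heq : pZ (quadFn A B C c) = fun _ => B := by
      funext q; exact quadFn_pZ A B C c q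
    rw [heq]
    exact tendsto_const_nhds

end Quadratic


section Vertical

variable {n : ℕ} {s : ℝ}

/-- Fundamental-theorem bound along vertical segments. -/
lemma vert_bound (hs0 : 0 < s) (hs1 : s < 1) {U : Pt n → ℝ} {M : ℝ}
    (hU2 : ContDiffOn ℝ 2 U (Dupper n s))
    (hU1 : ContinuousOn U (closure (Dupper n s)))
    {V : Set (Pt n)} (hV : ∀ q ∈ V, q ∈ Dupper n s → pZ U q ≤ M)
    {x : Euc n} {z : ℝ} (hxz : (x, z) ∈ Dupper n s)
    (hseg : ∀ t ∈ Ioc (0:ℝ) z, ((x, t) : Pt n) ∈ V) :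
    U (x, z) ≤ U (x, 0) + M * z := by
  have hz : 0 < z := ((mem_Dupper_iff hs0).1 hxz).2
  have hx1 : ‖x‖^2/2 < 1 := by
    have h := ((mem_Dupper_iff hs0).1 hxz).1
    have := hfun_nonneg hs0 hs1 z
    linarith
  set g : ℝ → ℝ := fun t => U (x, t) - M * t with hgdef
  have hmap : ∀ t ∈ Icc (0:ℝ) z, ((x, t) : Pt n) ∈ closure (Dupper n s) := by
    intro t ht
    rcases eq_or_lt_of_le ht.1 with h0 | h0
    · rw [← h0]; exact base_mem_closure_Dupper hs0 hs1 hx1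
    · exact subset_closure (seg_mem_Dupper hs0 hs1 hxz h0 ht.2)
  have hcont : ContinuousOn g (Icc 0 z) := by
    apply ContinuousOn.sub
    · exact hU1.comp ((continuous_const.prodMk continuous_id).continuousOn) hmap
    · exact (continuous_const.mul continuous_id).continuousOn
  have hdiff : ∀ t ∈ Ioo (0:ℝ) z, HasDerivAt g (pZ U (x, t) - M) t := by
    intro t ht
    have hmem : ((x, t) : Pt n) ∈ Dupper n s :=
      seg_mem_Dupper hs0 hs1 hxz ht.1 (le_of_lt ht.2)
    have hcd : ContDiffAt ℝ 2 U (x, t) :=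
      hU2.contDiffAt ((isOpen_Dupper hs0).mem_nhds hmem)
    exact (slice_hasDerivAt_pZ hcd).sub (by simpa using (hasDerivAt_id t).const_mul M)
  have hanti : AntitoneOn g (Icc 0 z) := by
    apply antitoneOn_of_deriv_nonpos (convex_Icc 0 z) hcont
    · intro t ht
      rw [interior_Icc] at ht
      exact (hdiff t ht).differentiableAt.differentiableWithinAt
    · intro t ht
      rw [interior_Icc] at ht
      rw [(hdiff t ht).deriv]
      have := hV (x, t) (hseg t ⟨ht.1, le_of_lt ht.2⟩)
        (seg_mem_Dupper hs0 hs1 hxz ht.1 (le_of_lt ht.2))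
      linarith
  have := hanti (left_mem_Icc.2 (le_of_lt hz)) (right_mem_Icc.2 (le_of_lt hz)) (le_of_lt hz)
  simp only [hgdef, mul_zero, sub_zero] at this
  linarith

end Vertical

section Master

variable {n : ℕ}

/-- Master lemma: the subsolution case. -/
lemma sub_case (n : ℕ) (s lam Lam : ℝ)
    (hs0 : 0 < s) (hs1 : s < 1) (hlam : 0 < lam)
    (a : Euc n → Fin n → Fin n → ℝ) (f : Euc n → ℝ) (F : Pt n → ℝ) (U : Pt n → ℝ)
    (ha : IsElliptic lam Lam a (secX 1 (0 : Euc n)))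
    (hf : ContinuousOn f (secX 1 (0 : Euc n)))
    (hU2 : ContDiffOn ℝ 2 U (Dupper n s))
    (hU1 : ContinuousOn U (closure (Dupper n s)))
    (hUz : ∀ p ∈ Tzero n s,
      ∃ L : ℝ, HasDerivWithinAt (fun t => U (p.1, t)) L (Ici (0 : ℝ)) 0 ∧
        Tendsto (pZ U) (𝓝[Dupper n s] p) (𝓝 L)) :
    ((∀ p ∈ Dupper n s, F p ≤ AOp s a U p) ∧
      (∀ p ∈ Tzero n s, ∀ L : ℝ,
        HasDerivWithinAt (fun t => U (p.1, t)) L (Ici (0 : ℝ)) 0 → f p.1 ≤ L))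
      ↔ ViscSub s a F f (Dupper n s) (Tzero n s) U := by
  constructor
  · rintro ⟨hc1, hc2⟩
    constructor
    · -- interior: classical implies viscosity
      intro ψ hψ p hp htouch
      obtain ⟨heq, E, hEo, _, hpE, hle⟩ := htouch
      have hmin : IsLocalMin (fun q => ψ q - U q) p := by
        have hn : E ∩ Dupper n s ∈ 𝓝 p := (hEo.inter (isOpen_Dupper hs0)).mem_nhds ⟨hpE, hp⟩
        unfold IsLocalMin IsMinFilter
        filter_upwards [hn] with q hq
        have h1 := hle q ⟨hq.1, hq.2⟩
        show ψ p - U p ≤ ψ q - U q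
        rw [heq]
        linarith
      have hx1 := mem_secX_of_Dupper hs0 hs1 hp
      have hAs := (ha p.1 hx1).1
      have hAq : ∀ ξ : Fin n → ℝ, 0 ≤ ∑ i, ∑ j, a p.1 i j * ξ i * ξ j := by
        intro ξ
        refine le_trans ?_ ((ha p.1 hx1).2 ξ).1
        have : (0:ℝ) ≤ ∑ i, ξ i ^ 2 := Finset.sum_nonneg (fun i _ => sq_nonneg _)
        positivity
      have hUat : ContDiffAt ℝ 2 U p := hU2.contDiffAt ((isOpen_Dupper hs0).mem_nhds hp)
      have hψat : ContDiffAt ℝ 2 ψ p := hψ.contDiffAt ((isOpen_Dupper hs0).mem_nhds hp)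
      exact le_trans (hc1 p hp) (AOp_le_of_localMin hAs hAq hUat hψat hmin)
    · -- boundary: classical implies viscosity
      intro ψ _ p hpT htouch L hL
      obtain ⟨L₀, hL₀, _⟩ := hUz p hpT
      have hf0 : f p.1 ≤ L₀ := hc2 p hpT L₀ hL₀
      obtain ⟨heq, E, hEo, _, hpE, hle⟩ := htouch
      obtain ⟨hx1, hp2⟩ := (mem_Tzero_iff hs0).1 hpT
      have hp' : ((p.1, (0:ℝ)) : Pt n) = p := by
        rw [← hp2]
      have hg : HasDerivWithinAt (fun t => ψ (p.1, t) - U (p.1, t)) (L - L₀) (Ici 0) 0 :=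
        hL.sub hL₀
      have hg0 : ψ (p.1, (0:ℝ)) - U (p.1, (0:ℝ)) = 0 := by rw [hp', heq, sub_self]
      have hpos : ∀ᶠ t in 𝓝[>] (0:ℝ), 0 ≤ ψ (p.1, t) - U (p.1, t) := by
        have hE : ∀ᶠ t in 𝓝 (0:ℝ), ((p.1, t) : Pt n) ∈ E := by
          have hc : ContinuousAt (fun t : ℝ => ((p.1, t) : Pt n)) 0 :=
            (continuous_const.prodMk continuous_id).continuousAt
          apply hc.eventually_mem
          rw [hp']
          exact hEo.mem_nhds hpE
        have hDup : ∀ᶠ t in 𝓝[>] (0:ℝ), ((p.1, t) : Pt n) ∈ Dupper n s := by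
          have hev : ∀ᶠ t in 𝓝 (0:ℝ), hfun s t < 1 - ‖p.1‖^2/2 :=
            (hfun_continuous hs0).continuousAt.eventually_lt continuousAt_const
              (show hfun s 0 < 1 - ‖p.1‖^2/2 by rw [hfun_zero hs0]; linarith)
          filter_upwards [eventually_nhdsWithin_of_eventually_nhds hev,
            self_mem_nhdsWithin] with t h1 h2
          rw [mem_Dupper_iff hs0]
          exact ⟨by linarith, h2⟩
        filter_upwards [eventually_nhdsWithin_of_eventually_nhds hE, hDup] with t h1 h2
        have := hle (p.1, t) ⟨h1, Or.inl ⟨h2, h2.2⟩⟩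
        linarith
      have := deriv_nonneg_of_eventually_nonneg hg hg0 hpos
      linarith
  · rintro ⟨v1, v2⟩
    constructor
    · intro p hp
      exact v1 U hU2 p hp ⟨rfl, univ, isOpen_univ, convex_univ, mem_univ _, fun q _ => le_rfl⟩
    · intro p hpT L hL
      obtain ⟨L₀, hL₀, htend⟩ := hUz p hpT
      have hLL : L = L₀ :=
        UniqueDiffWithinAt.eq_deriv _ (uniqueDiffOn_Ici 0 0 self_mem_Ici) hL hL₀
      rw [hLL]
      refine le_of_forall_pos_le_add ?_
      intro ε hε
      obtain ⟨hx1, hp2⟩ := (mem_Tzero_iff hs0).1 hpT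
      have hp' : ((p.1, (0:ℝ)) : Pt n) = p := by rw [← hp2]
      have hev : ∀ᶠ q in 𝓝 p, q ∈ Dupper n s → pZ U q < L₀ + ε := by
        have h := htend.eventually_lt_const (show L₀ < L₀ + ε by linarith)
        rwa [eventually_nhdsWithin_iff] at h
      obtain ⟨ρ, hρ, hρball⟩ := Metric.eventually_nhds_iff_ball.1 hev
      set η : ℝ := (1 - ‖p.1‖^2/2)/2 with hηdef
      have hη : 0 < η := by rw [hηdef]; linarith
      have hopen : IsOpen {x : Euc n | ‖x‖^2/2 < 1 - η} :=
        isOpen_lt ((continuous_norm.pow 2).div_const 2) continuous_const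
      have hx₀mem : p.1 ∈ {x : Euc n | ‖x‖^2/2 < 1 - η} := by
        simp only [mem_setOf_eq, hηdef]; linarith
      obtain ⟨r₁, hr₁, hball₁⟩ := Metric.isOpen_iff.1 hopen p.1 hx₀mem
      set r : ℝ := min (r₁/2) (ρ/2) with hrdef
      have hr : 0 < r := lt_min (by linarith) (by linarith)
      have hrρ : r ≤ ρ/2 := min_le_right _ _
      have hKsub : Metric.closedBall p.1 r ⊆ {x : Euc n | ‖x‖^2/2 < 1 - η} := by
        intro x hx
        apply hball₁
        rw [Metric.mem_ball]
        calc dist x p.1 ≤ r := Metric.mem_closedBall.1 hx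
          _ < r₁ := lt_of_le_of_lt (min_le_left _ _) (by linarith)
      -- choose z₀
      have hz₀ev : ∀ᶠ t in 𝓝 (0:ℝ), hfun s t < η ∧ t < ρ/2 := by
        refine Filter.Eventually.and ?_ ?_
        · exact (hfun_continuous hs0).continuousAt.eventually_lt continuousAt_const
            (show hfun s 0 < η by rw [hfun_zero hs0]; exact hη)
        · exact eventually_of_mem (Iio_mem_nhds (by linarith : (0:ℝ) < ρ/2)) (fun t ht => ht)
      obtain ⟨z₀, ⟨hz₀η, hz₀ρ⟩, hz₀pos⟩ :=
        ((eventually_nhdsWithin_of_eventually_nhds hz₀ev).and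
          (self_mem_nhdsWithin (s := Ioi (0:ℝ)))).exists
      have hz₀pos' : (0:ℝ) < z₀ := hz₀pos
      set K := Metric.closedBall p.1 r with hKdef
      have hKc : IsCompact K := isCompact_closedBall _ _
      have hKne : K.Nonempty := ⟨p.1, Metric.mem_closedBall_self (le_of_lt hr)⟩
      set W : Euc n → ℝ := fun x => U (x, 0) with hWdef
      have hKlt1 : ∀ x ∈ K, ‖x‖^2/2 < 1 := fun x hx => by
        have := hKsub hx; simp only [mem_setOf_eq] at this; linarith
      have hWc : ContinuousOn W K := by
        refine hU1.comp ((continuous_id.prodMk continuous_const).continuousOn) ?_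
        intro x hx
        exact base_mem_closure_Dupper hs0 hs1 (hKlt1 x hx)
      obtain ⟨xM, hxMK, hxMmax⟩ := hKc.exists_isMaxOn hKne hWc
      -- Key claim: touching paraboloids give good points arbitrarily close to p.1
      have key : ∀ δ, 0 < δ → δ ≤ r →
          ∃ x' : Euc n, dist x' p.1 < δ ∧ ‖x'‖^2/2 < 1 ∧ f x' ≤ L₀ + ε := by
        intro δ hδ hδr
        have hWM : W p.1 ≤ W xM := hxMmax (Metric.mem_closedBall_self (le_of_lt hr))
        set C : ℝ := (W xM - W p.1)/δ^2 + 1 with hCdef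
        have hC1 : 1 ≤ C := by
          rw [hCdef]
          have : (0:ℝ) ≤ (W xM - W p.1)/δ^2 := div_nonneg (by linarith) (sq_nonneg δ)
          linarith
        have hC0 : 0 < C := by linarith
        set G : Euc n → ℝ := fun x => W x - C*‖x - p.1‖^2 with hGdef
        have hGc : ContinuousOn G K :=
          hWc.sub (continuous_const.mul
            ((continuous_id.sub continuous_const).norm.pow 2)).continuousOn
        obtain ⟨x', hx'K, hx'max⟩ := hKc.exists_isMaxOn hKne hGc
        have hGx' : G p.1 ≤ G x' := hx'max (Metric.mem_closedBall_self (le_of_lt hr))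
        have hGp1 : G p.1 = W p.1 := by simp [hGdef]
        have hCd2 : C * δ^2 = (W xM - W p.1) + δ^2 := by
          rw [hCdef]; field_simp
        have hdistsq : ‖x' - p.1‖^2 < δ^2 := by
          have h1 : W p.1 ≤ W x' - C*‖x' - p.1‖^2 := by rw [← hGp1]; exact hGx'
          have h2 : W x' ≤ W xM := hxMmax hx'K
          nlinarith [sq_nonneg δ, sq_nonneg (‖x' - p.1‖)]
        have hdistlt : dist x' p.1 < δ := by
          rw [dist_eq_norm]
          exact lt_of_pow_lt_pow_left₀ 2 (le_of_lt hδ) hdistsq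
        have hx'1 : ‖x'‖^2/2 < 1 := hKlt1 x' hx'K
        set A : ℝ := W x' - C*‖x' - p.1‖^2 with hAdef
        set ψ : Pt n → ℝ := quadFn A (L₀+ε) C p.1 with hψdef
        have hq'T : ((x', (0:ℝ)) : Pt n) ∈ Tzero n s := (mem_Tzero_iff hs0).2 ⟨hx'1, rfl⟩
        have hGmax : ∀ x ∈ K, W x ≤ A + C*‖x - p.1‖^2 := by
          intro x hx
          have := hx'max hx
          have h3 : G x ≤ G x' := this
          rw [hGdef] at h3
          simp only at h3
          rw [hAdef]
          have : G x' = W x' - C*‖x' - p.1‖^2 := rfl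
          linarith [h3, this ▸ le_refl (G x')]
        have htouch : TouchAbove ψ U
            ((Dupper n s ∩ {q : Pt n | 0 < q.2}) ∪ Tzero n s) ((x', (0:ℝ)) : Pt n) := by
          refine ⟨?_, (Metric.ball p.1 r) ×ˢ Ioo (-z₀) z₀,
            Metric.isOpen_ball.prod isOpen_Ioo,
            (convex_ball _ _).prod (convex_Ioo _ _),
            ⟨Metric.mem_ball.2 (lt_of_lt_of_le hdistlt hδr), Set.mem_Ioo.2 ⟨show -z₀ < (0:ℝ) by linarith, hz₀pos'⟩⟩, ?_⟩
          · show A + C*‖x' - p.1‖^2 + (L₀+ε)*(0:ℝ) = U (x', 0)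
            rw [hAdef]; ring_nf; rfl
          · rintro ⟨x, z⟩ ⟨⟨hxball, hzI⟩, hqD⟩
            have hxK : x ∈ K := Metric.ball_subset_closedBall hxball
            rcases hqD with hDup | hT
            · -- interior points: vertical bound + paraboloid bound
              have hz0 : 0 < z := hDup.2
              have hzz₀ : z < z₀ := hzI.2
              have hvert : U (x, z) ≤ U (x, 0) + (L₀+ε)*z := by
                refine vert_bound hs0 hs1 hU2 hU1
                  (V := Metric.ball p ρ) ?_ hDup.1 ?_
                · intro q hq hqD
                  exact le_of_lt (hρball q hq hqD)
                · intro t ht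
                  rw [Metric.mem_ball, ← hp', Prod.dist_eq]
                  apply max_lt
                  · calc dist x p.1 < r := hxball
                      _ ≤ ρ/2 := hrρ
                      _ < ρ := by linarith
                  · rw [Real.dist_eq, sub_zero, abs_of_pos ht.1]
                    calc t ≤ z := ht.2
                      _ < z₀ := hzz₀
                      _ < ρ/2 := hz₀ρ
                      _ < ρ := by linarith
              have hpar : U (x, 0) ≤ A + C*‖x - p.1‖^2 := hGmax x hxK
              show U (x, z) ≤ A + C*‖x - p.1‖^2 + (L₀+ε)*z
              linarith
            · -- flat points
              have hz0 : z = 0 := hT.2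
              subst hz0
              have hpar : U (x, 0) ≤ A + C*‖x - p.1‖^2 := hGmax x hxK
              show U (x, 0) ≤ A + C*‖x - p.1‖^2 + (L₀+ε)*(0:ℝ)
              linarith
        have hfin := v2 ψ (quadFn_memCs A (L₀+ε) C p.1 _) ((x', (0:ℝ)) : Pt n) hq'T htouch
          (L₀+ε) (quadFn_zslice A (L₀+ε) C p.1 x' 0).hasDerivWithinAt
        exact ⟨x', hdistlt, hx'1, hfin⟩
      -- conclude by continuity of f
      by_contra hcon
      push_neg at hcon
      have hp1sec : p.1 ∈ secX 1 (0 : Euc n) := by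
        unfold secX deltaX; simp only [mem_setOf_eq, sub_zero]; exact hx1
      have hcf : ContinuousWithinAt f (secX 1 (0 : Euc n)) p.1 := hf p.1 hp1sec
      have hflt : ∀ᶠ x in 𝓝[secX 1 (0 : Euc n)] p.1, L₀ + ε < f x :=
        hcf.eventually_const_lt hcon
      rw [eventually_nhdsWithin_iff] at hflt
      obtain ⟨δ', hδ', hδ'ball⟩ := Metric.eventually_nhds_iff_ball.1 hflt
      obtain ⟨x', hx'd, hx'sec, hx'f⟩ := key (min (δ'/2) r) (lt_min (by linarith) hr)
        (min_le_right _ _)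
      have hx'ball : x' ∈ Metric.ball p.1 δ' := by
        rw [Metric.mem_ball]
        calc dist x' p.1 < min (δ'/2) r := hx'd
          _ ≤ δ'/2 := min_le_left _ _
          _ < δ' := by linarith
      have hx'sec' : x' ∈ secX 1 (0 : Euc n) := by
        unfold secX deltaX; simp only [mem_setOf_eq, sub_zero]; exact hx'sec
      have := hδ'ball x' hx'ball hx'sec'
      linarith

end Master


lemma viscSub_neg_of_viscSuper {n : ℕ} {s : ℝ} {a : Euc n → Fin n → Fin n → ℝ}
    {F : Pt n → ℝ} {f : Euc n → ℝ} {D T : Set (Pt n)} {U : Pt n → ℝ}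
    (h : ViscSuper s a F f D T U) :
    ViscSub s a (fun p => -F p) (fun x => -f x) D T (fun q => -U q) := by
  obtain ⟨h1, h2⟩ := h
  constructor
  · intro ψ hψ p hp htouch
    obtain ⟨heq, E, hE1, hE2, hE3, hE4⟩ := htouch
    have htb : TouchBelow (fun q => -ψ q) U D p := by
      refine ⟨by have h : ψ p = -U p := heq; show -ψ p = U p; linarith, E, hE1, hE2, hE3,
        fun q hq => by
          have h : -U q ≤ ψ q := hE4 q hq; show -ψ q ≤ U q; linarith⟩
    have := h1 (fun q => -ψ q) hψ.neg p hp htb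
    rw [AOp_neg] at this
    show -F p ≤ AOp s a ψ p
    linarith
  · intro ψ hψ p hp htouch L hL
    obtain ⟨heq, E, hE1, hE2, hE3, hE4⟩ := htouch
    have htb : TouchBelow (fun q => -ψ q) U (D ∩ {q : Pt n | 0 < q.2} ∪ T) p := by
      refine ⟨by have h : ψ p = -U p := heq; show -ψ p = U p; linarith, E, hE1, hE2, hE3,
        fun q hq => by
          have h : -U q ≤ ψ q := hE4 q hq; show -ψ q ≤ U q; linarith⟩
    have := h2 (fun q => -ψ q) hψ.neg p hp htb (-L) hL.neg
    show -f p.1 ≤ L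
    linarith

/-- **Lemma 4.4: classical (sub/super)solutions coincide with `C_s`-viscosity
(sub/super)solutions** among functions that are `C²` in the interior and `C¹` up to `{z=0}`. -/
theorem classical_iff_viscosity (n : ℕ) (hn : 1 ≤ n) (s lam Lam : ℝ)
    (hs0 : 0 < s) (hs1 : s < 1) (hlam : 0 < lam) (hLam : lam ≤ Lam)
    (a : Euc n → Fin n → Fin n → ℝ) (f : Euc n → ℝ) (F : Pt n → ℝ) (U : Pt n → ℝ)
    (ha : IsElliptic lam Lam a (secX 1 (0 : Euc n)))
    (hf : ContinuousOn f (secX 1 (0 : Euc n)))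
    (hF : ContinuousOn F (Dupper n s))
    (hU2 : ContDiffOn ℝ 2 U (Dupper n s))
    (hU1 : ContinuousOn U (closure (Dupper n s)))
    (hUz : ∀ p ∈ Tzero n s,
      ∃ L : ℝ, HasDerivWithinAt (fun t => U (p.1, t)) L (Ici (0 : ℝ)) 0 ∧
        Tendsto (pZ U) (𝓝[Dupper n s] p) (𝓝 L)) :
    (((∀ p ∈ Dupper n s, F p ≤ AOp s a U p) ∧
      (∀ p ∈ Tzero n s, ∀ L : ℝ,
        HasDerivWithinAt (fun t => U (p.1, t)) L (Ici (0 : ℝ)) 0 → f p.1 ≤ L))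
      ↔ ViscSub s a F f (Dupper n s) (Tzero n s) U) ∧
    (((∀ p ∈ Dupper n s, AOp s a U p ≤ F p) ∧
      (∀ p ∈ Tzero n s, ∀ L : ℝ,
        HasDerivWithinAt (fun t => U (p.1, t)) L (Ici (0 : ℝ)) 0 → L ≤ f p.1))
      ↔ ViscSuper s a F f (Dupper n s) (Tzero n s) U) := by
  constructor
  · exact sub_case n s lam Lam hs0 hs1 hlam a f F U ha hf hU2 hU1 hUz
  · -- supersolution case via negation
    have hUz' : ∀ p ∈ Tzero n s,
        ∃ L : ℝ, HasDerivWithinAt (fun t => (fun q : Pt n => -U q) (p.1, t)) L (Ici (0:ℝ)) 0 ∧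
          Tendsto (pZ (fun q : Pt n => -U q)) (𝓝[Dupper n s] p) (𝓝 L) := by
      intro p hp
      obtain ⟨L₀, hL₀, htend⟩ := hUz p hp
      refine ⟨-L₀, hL₀.neg, ?_⟩
      have heq : pZ (fun q : Pt n => -U q) = fun q => -pZ U q := by
        funext q; exact pZ_neg U q
      rw [heq]
      exact htend.neg
    have hsub := sub_case n s lam Lam hs0 hs1 hlam a (fun x => -f x) (fun p => -F p)
      (fun q => -U q) ha hf.neg hU2.neg hU1.neg hUz'
    constructor
    · rintro ⟨hc1, hc2⟩
      apply viscSuper_of_viscSub_neg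
      apply hsub.1
      constructor
      · intro p hp
        rw [AOp_neg]
        have := hc1 p hp
        show -F p ≤ -AOp s a U p
        linarith
      · intro p hp L hL
        have hL' : HasDerivWithinAt (fun t => U (p.1, t)) (-L) (Ici (0:ℝ)) 0 := by
          have := hL.neg
          simpa [Pi.neg_def] using this
        have := hc2 p hp (-L) hL'
        show -f p.1 ≤ L
        linarith
    · intro hvs
      have hsub' := hsub.2 (viscSub_neg_of_viscSuper hvs)
      obtain ⟨hc1, hc2⟩ := hsub'
      constructor
      · intro p hp
        have := hc1 p hp
        rw [AOp_neg] at this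
        have h' : -F p ≤ -AOp s a U p := this
        linarith
      · intro p hp L hL
        have := hc2 p hp (-L) hL.neg
        have h' : -f p.1 ≤ -L := this
        linarith
end
end

section
/- Comparison of one-dimensional sections with Euclidean intervals away from the degeneracy (Lemma 3.1): Let R > 0 and z₀ ∈ ℝ with z₀ ≠ 0. (a) If the interval B_R(z₀) = (z₀ − R, z₀ + R) has closure contained in {z ≠ 0}, then B_R(z₀) ⊂ S_{σR²/2}(z₀), where σ = sup of h'' over B_R(z₀). (b) If the section S_R(z₀) has closure contained in {z ≠ 0}, then S_R(z₀) is contained (with compact closure) in B_{√(2R/σ̃)}(z₀), where σ̃ = inf of h'' over S_R(z₀). -/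
open Set Filter Topology MeasureTheory
open scoped RealInnerProductSpace

noncomputable section

lemma myHasDerivAt_abs_rpow (q t : ℝ) (ht : t ≠ 0) :
    HasDerivAt (fun z : ℝ => |z| ^ q) (q * t * |t| ^ (q - 2)) t := by
  rcases ht.lt_or_gt with h | h
  · have hpos : 0 < -t := by linarith
    have h1 : HasDerivAt (fun u : ℝ => u ^ q) (q * (-t) ^ (q - 1)) (-t) :=
      Real.hasDerivAt_rpow_const (Or.inl (by positivity))
    have h2 : HasDerivAt (fun z : ℝ => (-z) ^ q) (q * (-t) ^ (q - 1) * (-1)) t :=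
      h1.comp t (hasDerivAt_neg t)
    have hval : q * (-t) ^ (q - 1) * (-1) = q * t * |t| ^ (q - 2) := by
      rw [abs_of_neg h, show q - 1 = (q - 2) + 1 by ring,
        Real.rpow_add_one (ne_of_gt hpos)]
      ring
    rw [hval] at h2
    apply h2.congr_of_eventuallyEq
    filter_upwards [Iio_mem_nhds h] with z hz
    rw [abs_of_neg hz]
  · have h1 : HasDerivAt (fun u : ℝ => u ^ q) (q * t ^ (q - 1)) t :=
      Real.hasDerivAt_rpow_const (Or.inl (ne_of_gt h))
    have hval : q * t ^ (q - 1) = q * t * |t| ^ (q - 2) := by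
      rw [abs_of_pos h, show q - 1 = (q - 2) + 1 by ring,
        Real.rpow_add_one (ne_of_gt h)]
      ring
    rw [hval] at h1
    apply h1.congr_of_eventuallyEq
    filter_upwards [Ioi_mem_nhds h] with z hz
    rw [abs_of_pos hz]

lemma hasDerivAt_hfun {s : ℝ} (hs0 : 0 < s) (hs1 : s < 1) (t : ℝ) (ht : t ≠ 0) :
    HasDerivAt (hfun s) (hder s t) t := by
  have h := (myHasDerivAt_abs_rpow (1 / s) t ht).const_mul (s ^ 2 / (1 - s))
  have hval : s ^ 2 / (1 - s) * (1 / s * t * |t| ^ (1 / s - 2)) = hder s t := by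
    unfold hder
    have hs : s ≠ 0 := ne_of_gt hs0
    have h1s : (1 : ℝ) - s ≠ 0 := by intro h; linarith
    field_simp
  rw [hval] at h
  exact h

lemma hasDerivAt_hder {s : ℝ} (hs0 : 0 < s) (hs1 : s < 1) (t : ℝ) (ht : t ≠ 0) :
    HasDerivAt (hder s) (hsec s t) t := by
  have h1 : HasDerivAt (fun z : ℝ => |z| ^ (1 / s - 2))
      ((1 / s - 2) * t * |t| ^ (1 / s - 2 - 2)) t := myHasDerivAt_abs_rpow _ t ht
  have h2 : HasDerivAt (fun z : ℝ => z) 1 t := hasDerivAt_id t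
  have h3 := (h2.mul h1).const_mul (s / (1 - s))
  have habs : 0 < |t| := abs_pos.mpr ht
  have hsq : t * ((1 / s - 2) * t * |t| ^ (1 / s - 2 - 2)) = (1 / s - 2) * |t| ^ (1 / s - 2) := by
    have : t * t = |t| ^ (2 : ℝ) := by
      rw [Real.rpow_two, sq_abs, sq]
    calc t * ((1 / s - 2) * t * |t| ^ (1 / s - 2 - 2))
        = (1 / s - 2) * ((t * t) * |t| ^ (1 / s - 2 - 2)) := by ring
      _ = (1 / s - 2) * (|t| ^ (2 : ℝ) * |t| ^ (1 / s - 2 - 2)) := by rw [this]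
      _ = (1 / s - 2) * |t| ^ (1 / s - 2) := by
          rw [← Real.rpow_add habs]; ring_nf
  have hval : s / (1 - s) * (1 * |t| ^ (1 / s - 2) + t * ((1 / s - 2) * t * |t| ^ (1 / s - 2 - 2)))
      = hsec s t := by
    rw [hsq]
    unfold hsec
    have hs : s ≠ 0 := ne_of_gt hs0
    have h1s : (1 : ℝ) - s ≠ 0 := by intro h; linarith [h]
    field_simp
    ring
  have : HasDerivAt (fun z : ℝ => s / (1 - s) * (z * |z| ^ (1 / s - 2))) (hsec s t) t := by
    rw [← hval]; exact h3
  apply this.congr_of_eventuallyEq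
  filter_upwards with z
  unfold hder
  ring

lemma nonneg_of_deriv2 (g g' g'' : ℝ → ℝ) (z₀ z : ℝ)
    (hd : ∀ t ∈ uIcc z₀ z, HasDerivAt g (g' t) t)
    (hd' : ∀ t ∈ uIcc z₀ z, HasDerivAt g' (g'' t) t)
    (h0 : ∀ t ∈ uIcc z₀ z, 0 ≤ g'' t)
    (hg'0 : g' z₀ = 0) : g z₀ ≤ g z := by
  rcases le_total z₀ z with hle | hle
  · rw [uIcc_of_le hle] at hd hd' h0
    have hsub : Ioo z₀ z ⊆ Icc z₀ z := Ioo_subset_Icc_self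
    have hint : interior (Icc z₀ z) = Ioo z₀ z := interior_Icc
    have hmono' : MonotoneOn g' (Icc z₀ z) := by
      apply monotoneOn_of_deriv_nonneg (convex_Icc _ _)
      · exact fun t htm => (hd' t htm).continuousAt.continuousWithinAt
      · rw [hint]; exact fun t htm => (hd' t (hsub htm)).differentiableAt.differentiableWithinAt
      · rw [hint]; intro t htm; rw [(hd' t (hsub htm)).deriv]; exact h0 t (hsub htm)
    have hg'nonneg : ∀ t ∈ Icc z₀ z, 0 ≤ g' t := fun t htm => by
      rw [← hg'0]
      exact hmono' (left_mem_Icc.mpr hle) htm htm.1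
    have hmono : MonotoneOn g (Icc z₀ z) := by
      apply monotoneOn_of_deriv_nonneg (convex_Icc _ _)
      · exact fun t htm => (hd t htm).continuousAt.continuousWithinAt
      · rw [hint]; exact fun t htm => (hd t (hsub htm)).differentiableAt.differentiableWithinAt
      · rw [hint]; intro t htm; rw [(hd t (hsub htm)).deriv]; exact hg'nonneg t (hsub htm)
    exact hmono (left_mem_Icc.mpr hle) (right_mem_Icc.mpr hle) hle
  · rw [uIcc_of_ge hle] at hd hd' h0
    have hsub : Ioo z z₀ ⊆ Icc z z₀ := Ioo_subset_Icc_self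
    have hint : interior (Icc z z₀) = Ioo z z₀ := interior_Icc
    have hmono' : MonotoneOn g' (Icc z z₀) := by
      apply monotoneOn_of_deriv_nonneg (convex_Icc _ _)
      · exact fun t htm => (hd' t htm).continuousAt.continuousWithinAt
      · rw [hint]; exact fun t htm => (hd' t (hsub htm)).differentiableAt.differentiableWithinAt
      · rw [hint]; intro t htm; rw [(hd' t (hsub htm)).deriv]; exact h0 t (hsub htm)
    have hg'nonpos : ∀ t ∈ Icc z z₀, g' t ≤ 0 := fun t htm => by
      rw [← hg'0]
      exact hmono' htm (right_mem_Icc.mpr hle) htm.2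
    have hanti : AntitoneOn g (Icc z z₀) := by
      apply antitoneOn_of_deriv_nonpos (convex_Icc _ _)
      · exact fun t htm => (hd t htm).continuousAt.continuousWithinAt
      · rw [hint]; exact fun t htm => (hd t (hsub htm)).differentiableAt.differentiableWithinAt
      · rw [hint]; intro t htm; rw [(hd t (hsub htm)).deriv]; exact hg'nonpos t (hsub htm)
    exact hanti (left_mem_Icc.mpr hle) (right_mem_Icc.mpr hle) hle

lemma deltaH_self (s z₀ : ℝ) : deltaH s z₀ z₀ = 0 := by
  unfold deltaH; ring

lemma deltaH_le_of_hsec_le {s : ℝ} (hs0 : 0 < s) (hs1 : s < 1) (σ z₀ z : ℝ)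
    (hne : ∀ t ∈ uIcc z₀ z, t ≠ 0)
    (hσ : ∀ t ∈ uIcc z₀ z, hsec s t ≤ σ) :
    deltaH s z₀ z ≤ σ * (z - z₀) ^ 2 / 2 := by
  have key := nonneg_of_deriv2 (fun t => σ * (t - z₀) ^ 2 / 2 - deltaH s z₀ t)
    (fun t => σ * (t - z₀) - (hder s t - hder s z₀))
    (fun t => σ - hsec s t) z₀ z
    (fun t htm => by
      have h1 := hasDerivAt_hfun hs0 hs1 t (hne t htm)
      have h2 : HasDerivAt (fun u : ℝ => σ * (u - z₀) ^ 2 / 2) (σ * (t - z₀)) t := by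
        have h := (((hasDerivAt_id t).sub_const z₀).pow 2).const_mul (σ / 2)
        have hv : σ / 2 * ((2 : ℕ) * (id t - z₀) ^ (2 - 1) * 1) = σ * (t - z₀) := by
          simp; ring
        rw [hv] at h
        exact h.congr_of_eventuallyEq (by filter_upwards with u; simp; ring)
      have h3 : HasDerivAt (fun u : ℝ => deltaH s z₀ u) (hder s t - hder s z₀) t := by
        have h := (h1.sub_const (hfun s z₀)).sub
          (((hasDerivAt_id t).sub_const z₀).const_mul (hder s z₀))
        rw [show hder s t - hder s z₀ * 1 = hder s t - hder s z₀ by ring] at h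
        exact h.congr_of_eventuallyEq (by filter_upwards with u; simp [deltaH])
      exact h2.sub h3)
    (fun t htm => by
      have h1 := hasDerivAt_hder hs0 hs1 t (hne t htm)
      have h2 : HasDerivAt (fun u : ℝ => σ * (u - z₀)) σ t := by
        have := ((hasDerivAt_id t).sub_const z₀).const_mul σ
        simpa using this
      have h3 : HasDerivAt (fun u : ℝ => hder s u - hder s z₀) (hsec s t) t :=
        h1.sub_const _
      exact h2.sub h3)
    (fun t htm => sub_nonneg.mpr (hσ t htm))
    (by simp [hder])
  simp only [sub_self, ne_eq, deltaH_self] at key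
  linarith [key]

lemma deltaH_ge_of_le_hsec {s : ℝ} (hs0 : 0 < s) (hs1 : s < 1) (τ z₀ z : ℝ)
    (hne : ∀ t ∈ uIcc z₀ z, t ≠ 0)
    (hτ : ∀ t ∈ uIcc z₀ z, τ ≤ hsec s t) :
    τ * (z - z₀) ^ 2 / 2 ≤ deltaH s z₀ z := by
  have key := nonneg_of_deriv2 (fun t => deltaH s z₀ t - τ * (t - z₀) ^ 2 / 2)
    (fun t => (hder s t - hder s z₀) - τ * (t - z₀))
    (fun t => hsec s t - τ) z₀ z
    (fun t htm => by
      have h1 := hasDerivAt_hfun hs0 hs1 t (hne t htm)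
      have h2 : HasDerivAt (fun u : ℝ => τ * (u - z₀) ^ 2 / 2) (τ * (t - z₀)) t := by
        have h := (((hasDerivAt_id t).sub_const z₀).pow 2).const_mul (τ / 2)
        have hv : τ / 2 * ((2 : ℕ) * (id t - z₀) ^ (2 - 1) * 1) = τ * (t - z₀) := by
          simp; ring
        rw [hv] at h
        exact h.congr_of_eventuallyEq (by filter_upwards with u; simp; ring)
      have h3 : HasDerivAt (fun u : ℝ => deltaH s z₀ u) (hder s t - hder s z₀) t := by
        have h := (h1.sub_const (hfun s z₀)).sub
          (((hasDerivAt_id t).sub_const z₀).const_mul (hder s z₀))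
        rw [show hder s t - hder s z₀ * 1 = hder s t - hder s z₀ by ring] at h
        exact h.congr_of_eventuallyEq (by filter_upwards with u; simp [deltaH])
      exact h3.sub h2)
    (fun t htm => by
      have h1 := hasDerivAt_hder hs0 hs1 t (hne t htm)
      have h2 : HasDerivAt (fun u : ℝ => τ * (u - z₀)) τ t := by
        have := ((hasDerivAt_id t).sub_const z₀).const_mul τ
        simpa using this
      have h3 : HasDerivAt (fun u : ℝ => hder s u - hder s z₀) (hsec s t) t :=
        h1.sub_const _
      exact h3.sub h2)
    (fun t htm => sub_nonneg.mpr (hτ t htm))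
    (by simp [hder])
  simp only [sub_self, deltaH_self] at key
  linarith [key]

lemma convexOn_hfun {s : ℝ} (hs0 : 0 < s) (hs1 : s < 1) : ConvexOn ℝ univ (hfun s) := by
  have hp : (1 : ℝ) ≤ 1 / s := by rw [le_div_iff₀ hs0]; linarith
  have habs : ConvexOn ℝ univ (fun z : ℝ => |z|) := by
    refine ⟨convex_univ, fun x _ y _ a b ha hb _ => ?_⟩
    simp only [smul_eq_mul]
    calc |a * x + b * y| ≤ |a * x| + |b * y| := abs_add_le _ _
      _ = a * |x| + b * |y| := by rw [abs_mul, abs_mul, abs_of_nonneg ha, abs_of_nonneg hb]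
  have himg : (fun z : ℝ => |z|) '' univ = Ici 0 := by
    ext x
    simp only [image_univ, mem_range, mem_Ici]
    exact ⟨fun ⟨y, hy⟩ => hy ▸ abs_nonneg y, fun hx => ⟨x, abs_of_nonneg hx⟩⟩
  have hg : ConvexOn ℝ ((fun z : ℝ => |z|) '' univ) (fun x : ℝ => x ^ (1 / s)) := by
    rw [himg]; exact convexOn_rpow hp
  have hmono : MonotoneOn (fun x : ℝ => x ^ (1 / s)) ((fun z : ℝ => |z|) '' univ) := by
    rw [himg]
    intro a ha b _ hab
    exact Real.rpow_le_rpow ha hab (by linarith)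
  have hc : (0 : ℝ) ≤ s ^ 2 / (1 - s) := by
    have h' : (0:ℝ) < 1 - s := by linarith
    positivity
  have hcomp := (hg.comp habs hmono).smul hc
  have heq : hfun s = fun z => (s ^ 2 / (1 - s)) • ((fun x : ℝ => x ^ (1 / s)) ∘ fun z : ℝ => |z|) z := by
    funext z; simp [hfun, smul_eq_mul, Function.comp]
  rw [heq]
  exact hcomp

lemma convexOn_deltaH {s : ℝ} (hs0 : 0 < s) (hs1 : s < 1) (z₀ : ℝ) :
    ConvexOn ℝ univ (deltaH s z₀) := by
  have h1 := convexOn_hfun hs0 hs1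
  have h2 : ConvexOn ℝ univ (fun z : ℝ => -hfun s z₀ - hder s z₀ * (z - z₀)) := by
    refine ⟨convex_univ, fun x _ y _ a b ha hb hab => le_of_eq ?_⟩
    simp only [smul_eq_mul]
    linear_combination (hfun s z₀ - hder s z₀ * z₀) * hab
  have heq : deltaH s z₀ = fun z => hfun s z + (-hfun s z₀ - hder s z₀ * (z - z₀)) := by
    funext z; simp [deltaH]; ring
  rw [heq]
  exact h1.add h2

lemma tendsto_aux (c p A B : ℝ) (hc : 0 < c) (hp : 1 < p) :
    Tendsto (fun z : ℝ => c * |z| ^ p + A * z + B) atTop atTop := by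
  have h1 : Tendsto (fun z : ℝ => c * z ^ (p - 1)) atTop atTop :=
    (tendsto_rpow_atTop (by linarith)).const_mul_atTop hc
  have h2 : Tendsto (fun z : ℝ => z * (c * z ^ (p - 1) + A) + B) atTop atTop :=
    tendsto_atTop_add_const_right _ B
      (tendsto_id.atTop_mul_atTop₀ (tendsto_atTop_add_const_right _ A h1))
  apply h2.congr'
  filter_upwards [eventually_gt_atTop 0] with z hz
  have h3 : z ^ p = z ^ (p - 1) * z := by
    rw [← Real.rpow_add_one (ne_of_gt hz) (p - 1)]; ring_nf
  rw [abs_of_pos hz, h3]; ring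

lemma tendsto_aux_bot (c p A B : ℝ) (hc : 0 < c) (hp : 1 < p) :
    Tendsto (fun z : ℝ => c * |z| ^ p + A * z + B) atBot atTop := by
  have h := (tendsto_aux c p (-A) B hc hp).comp tendsto_neg_atBot_atTop
  apply h.congr
  intro z
  simp only [Function.comp_apply, abs_neg]
  ring

lemma tendsto_deltaH {s : ℝ} (hs0 : 0 < s) (hs1 : s < 1) (z₀ : ℝ) :
    Tendsto (deltaH s z₀) atTop atTop ∧ Tendsto (deltaH s z₀) atBot atTop := by
  have hc : (0 : ℝ) < s ^ 2 / (1 - s) := by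
    have : (0:ℝ) < 1 - s := by linarith
    positivity
  have hp : (1 : ℝ) < 1 / s := by rw [lt_div_iff₀ hs0]; linarith
  have heq : deltaH s z₀ = fun z =>
      s ^ 2 / (1 - s) * |z| ^ (1 / s) + (-hder s z₀) * z + (hder s z₀ * z₀ - hfun s z₀) := by
    funext z; simp [deltaH, hfun]; ring
  rw [heq]
  exact ⟨tendsto_aux _ _ _ _ hc hp, tendsto_aux_bot _ _ _ _ hc hp⟩

/-- **Lemma 3.1: comparison of one-dimensional sections with euclidean intervals away from the
degeneracy.** -/
theorem sections_vs_intervals (s : ℝ) (hs0 : 0 < s) (hs1 : s < 1)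
    (R z₀ : ℝ) (hR : 0 < R) (hz₀ : z₀ ≠ 0) :
    ((0 : ℝ) ∉ Icc (z₀ - R) (z₀ + R) →
      ∀ σ : ℝ, (∀ z ∈ Ioo (z₀ - R) (z₀ + R), hsec s z ≤ σ) →
        Ioo (z₀ - R) (z₀ + R) ⊆ secH s (σ * R ^ 2 / 2) z₀) ∧
    ((0 : ℝ) ∉ closure (secH s R z₀) →
      IsCompact (closure (secH s R z₀)) ∧
      ∀ τ : ℝ, 0 < τ → (∀ z ∈ secH s R z₀, τ ≤ hsec s z) →
        secH s R z₀ ⊆ Ioo (z₀ - Real.sqrt (2 * R / τ)) (z₀ + Real.sqrt (2 * R / τ))) := by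
  constructor
  · intro h0 σ hσ z hz
    have hz₀m : z₀ ∈ Ioo (z₀ - R) (z₀ + R) := ⟨by linarith, by linarith⟩
    have hIsub : uIcc z₀ z ⊆ Ioo (z₀ - R) (z₀ + R) := by
      intro t ht
      rcases le_total z₀ z with h | h
      · rw [uIcc_of_le h] at ht
        exact ⟨by linarith [ht.1, hz₀m.1], lt_of_le_of_lt ht.2 hz.2⟩
      · rw [uIcc_of_ge h] at ht
        exact ⟨lt_of_lt_of_le hz.1 ht.1, by linarith [ht.2, hz₀m.2]⟩
    have hne : ∀ t ∈ uIcc z₀ z, t ≠ 0 := by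
      intro t ht he
      have := hIsub ht
      rw [he] at this
      exact h0 ⟨this.1.le, this.2.le⟩
    have hle := deltaH_le_of_hsec_le hs0 hs1 σ z₀ z hne (fun t ht => hσ t (hIsub ht))
    have hσpos : 0 < σ :=
      lt_of_lt_of_le (Real.rpow_pos_of_pos (abs_pos.mpr hz₀) _) (hσ z₀ hz₀m)
    have hsq : (z - z₀) ^ 2 < R ^ 2 := by nlinarith [hz.1, hz.2]
    show deltaH s z₀ z < σ * R ^ 2 / 2
    nlinarith
  · intro h0
    obtain ⟨htop, hbot⟩ := tendsto_deltaH hs0 hs1 z₀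
    obtain ⟨M, hM⟩ := eventually_atTop.mp (htop.eventually_ge_atTop R)
    obtain ⟨m, hm⟩ := eventually_atBot.mp (hbot.eventually_ge_atTop R)
    have hsub : secH s R z₀ ⊆ Icc m M := by
      intro z hz
      have hzR : deltaH s z₀ z < R := hz
      constructor
      · by_contra h
        push_neg at h
        exact absurd hzR (not_lt.mpr (hm z h.le))
      · by_contra h
        push_neg at h
        exact absurd hzR (not_lt.mpr (hM z h.le))
    refine ⟨isCompact_Icc.of_isClosed_subset isClosed_closure
      (closure_minimal hsub isClosed_Icc), ?_⟩
    intro τ hτ hτle z hz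
    have hconv : Convex ℝ (secH s R z₀) := by
      have h := (convexOn_deltaH hs0 hs1 z₀).convex_lt R
      simpa [secH, sep_univ] using h
    have hz₀mem : z₀ ∈ secH s R z₀ := by
      show deltaH s z₀ z₀ < R
      rw [deltaH_self]; exact hR
    have hseg : uIcc z₀ z ⊆ secH s R z₀ := by
      rw [← segment_eq_uIcc]
      exact hconv.segment_subset hz₀mem hz
    have hne : ∀ t ∈ uIcc z₀ z, t ≠ 0 := fun t ht he =>
      h0 (subset_closure (he ▸ hseg ht))
    have hge := deltaH_ge_of_le_hsec hs0 hs1 τ z₀ z hne (fun t ht => hτle t (hseg ht))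
    have hzR : deltaH s z₀ z < R := hz
    have h2 : (z - z₀) ^ 2 < 2 * R / τ := by
      rw [lt_div_iff₀ hτ]; nlinarith
    have habs : |z - z₀| < Real.sqrt (2 * R / τ) :=
      (Real.lt_sqrt (abs_nonneg _)).mpr (by rwa [sq_abs])
    obtain ⟨ha, hb⟩ := abs_lt.mp habs
    exact ⟨by linarith, by linarith⟩
end
end

section
/- A∞-type absolute continuity of the Monge–Ampère measure μ_h on sections (Lemma 3.2): For every 0 < ε < 1 there exists 0 < ε₀ < 1, depending only on ε and on 0 < s < 1, such that for every section S_R(z) ⊂ ℝ and every Lebesgue-measurable set E ⊂ S_R(z), if |E|/|S_R(z)| < ε₀ then μ_h(E)/μ_h(S_R(z)) < ε, where |·| denotes Lebesgue measure. -/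
open Set Filter Topology MeasureTheory
open scoped RealInnerProductSpace

noncomputable section

/-! ### Auxiliary lemmas for Lemma 3.2 -/

section MuHAinftyAux

open intervalIntegral in
private lemma integral_rpow_aux {a b r : ℝ} (h : -1 < r) :
    ∫ x in a..b, x ^ r = (b ^ (r + 1) - a ^ (r + 1)) / (r + 1) :=
  integral_rpow (Or.inl h)

open intervalIntegral in
private lemma integrableOn_rpow_aux {r t : ℝ} (ht : 0 < t) (h : -1 < r) :
    MeasureTheory.IntegrableOn (fun x : ℝ => x ^ r) (Set.Ioo 0 t) :=
  (integrableOn_Ioo_rpow_iff ht).2 h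

lemma muH_apply' (s : ℝ) {E : Set ℝ} (hE : MeasurableSet E) :
    muH s E = ∫⁻ z in E, ENNReal.ofReal (|z| ^ (1 / s - 2)) :=
  withDensity_apply _ hE

lemma muH_upper' (s m : ℝ) {E : Set ℝ} (hE : MeasurableSet E)
    (h : ∀ z ∈ E, |z| ^ (1 / s - 2) ≤ m) :
    muH s E ≤ ENNReal.ofReal m * volume E := by
  rw [muH_apply' s hE, ← setLIntegral_const]
  exact setLIntegral_mono' hE fun z hz => ENNReal.ofReal_le_ofReal (h z hz)

lemma ae_ne_zero' : ∀ᵐ z : ℝ ∂volume, z ≠ 0 := by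
  have h : ({0} : Set ℝ) = {z : ℝ | ¬ z ≠ 0} := by ext z; simp
  rw [ae_iff, ← h]
  exact measure_singleton 0

lemma muH_lower' (s m : ℝ) {F : Set ℝ} (hF : MeasurableSet F)
    (h : ∀ z ∈ F, z ≠ 0 → m ≤ |z| ^ (1 / s - 2)) :
    ENNReal.ofReal m * volume F ≤ muH s F := by
  rw [muH_apply' s hF, ← setLIntegral_const]
  refine setLIntegral_mono_ae' hF ?_
  filter_upwards [ae_ne_zero'] with z hz hzF
  exact ENNReal.ofReal_le_ofReal (h z hzF hz)

lemma muH_Ioo_neg' (s r : ℝ) : muH s (Ioo (-r) 0) = muH s (Ioo 0 r) := by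
  rw [muH_apply' s measurableSet_Ioo, muH_apply' s measurableSet_Ioo]
  have hemb : MeasurableEmbedding (Neg.neg : ℝ → ℝ) := (Homeomorph.neg ℝ).measurableEmbedding
  have hmp := Measure.measurePreserving_neg (volume : Measure ℝ)
  have key := hmp.setLIntegral_comp_preimage_emb hemb
    (fun z => ENNReal.ofReal (|z| ^ (1 / s - 2))) (Ioo 0 r)
  have hpre : (Neg.neg : ℝ → ℝ) ⁻¹' Ioo 0 r = Ioo (-r) 0 := by
    ext z
    simp only [Set.mem_preimage, Set.mem_Ioo]
    constructor
    · rintro ⟨h1, h2⟩; constructor <;> linarith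
    · rintro ⟨h1, h2⟩; constructor <;> linarith
  rw [hpre] at key
  rw [← key]
  refine setLIntegral_congr_fun measurableSet_Ioo (fun z hz => ?_)
  simp only [abs_neg]

lemma muH_Ioo' (s r : ℝ) (hα : -1 < 1 / s - 2) (hr : 0 < r) :
    muH s (Ioo 0 r) = ENNReal.ofReal (r ^ (1 / s - 1) / (1 / s - 1)) := by
  have hα1 : 0 < 1 / s - 1 := by linarith
  rw [muH_apply' s measurableSet_Ioo]
  have hcong : (∫⁻ z in Ioo (0:ℝ) r, ENNReal.ofReal (|z| ^ (1 / s - 2)))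
      = ∫⁻ z in Ioo (0:ℝ) r, ENNReal.ofReal (z ^ (1 / s - 2)) :=
    setLIntegral_congr_fun measurableSet_Ioo
      (fun z hz => by simp only [abs_of_pos hz.1])
  rw [hcong]
  have hint : MeasureTheory.IntegrableOn (fun z : ℝ => z ^ (1 / s - 2)) (Ioo 0 r) :=
    integrableOn_rpow_aux hr hα
  have hnn : 0 ≤ᵐ[volume.restrict (Ioo (0:ℝ) r)] fun z : ℝ => z ^ (1 / s - 2) := by
    refine (ae_restrict_iff' measurableSet_Ioo).2 (Filter.Eventually.of_forall fun z hz => ?_)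
    exact Real.rpow_nonneg hz.1.le _
  rw [← MeasureTheory.ofReal_integral_eq_lintegral_ofReal hint hnn]
  congr 1
  have hval : (∫ z in Set.Ioo (0:ℝ) r, z ^ (1 / s - 2)) = r ^ (1 / s - 1) / (1 / s - 1) := by
    rw [← MeasureTheory.integral_Ioc_eq_integral_Ioo, ← intervalIntegral.integral_of_le hr.le,
      integral_rpow_aux hα]
    have h1 : 1 / s - 2 + 1 = 1 / s - 1 := by ring
    rw [h1, Real.zero_rpow hα1.ne', sub_zero]
  exact hval

lemma secH_Ioo' {s : ℝ} (hs0 : 0 < s) (hs1 : s < 1) (R z₀ : ℝ) (hR : 0 < R) :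
    ∃ a b : ℝ, a < b ∧ secH s R z₀ = Ioo a b := by
  have hp : 1 < 1 / s := one_lt_one_div hs0 hs1
  have h1s : 0 < 1 - s := by linarith
  have hc : 0 < s ^ 2 / (1 - s) := by positivity
  -- continuity of δ
  have habs : Continuous fun z : ℝ => |z| ^ (1 / s) :=
    continuous_abs.rpow_const fun z => Or.inr (by linarith)
  have hcont : Continuous fun z => deltaH s z₀ z := by
    unfold deltaH hfun
    exact ((continuous_const.mul habs).sub continuous_const).sub
      (continuous_const.mul (continuous_id.sub continuous_const))
  have hopen : IsOpen (secH s R z₀) := isOpen_lt hcont continuous_const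
  have hz₀ : z₀ ∈ secH s R z₀ := by
    show deltaH s z₀ z₀ < R
    simpa [deltaH] using hR
  -- convexity of δ
  have himg : (fun z : ℝ => |z|) '' Set.univ = Set.Ici 0 := by
    ext x
    simp only [Set.image_univ, Set.mem_range, Set.mem_Ici]
    constructor
    · rintro ⟨y, rfl⟩; exact abs_nonneg y
    · intro hx; exact ⟨x, abs_of_nonneg hx⟩
  have habs_cvx : ConvexOn ℝ Set.univ fun z : ℝ => |z| ^ (1 / s) := by
    have hg : ConvexOn ℝ ((fun z : ℝ => |z|) '' Set.univ) fun x : ℝ => x ^ (1 / s) := by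
      rw [himg]; exact convexOn_rpow hp.le
    have hmono : MonotoneOn (fun x : ℝ => x ^ (1 / s)) ((fun z : ℝ => |z|) '' Set.univ) := by
      rw [himg]
      exact fun x hx y _ hxy => Real.rpow_le_rpow hx hxy (by linarith)
    have habs' : ConvexOn ℝ Set.univ fun z : ℝ => |z| := by
      exact convexOn_univ_norm (E := ℝ)
    exact hg.comp habs' hmono
  have hcvx : ConvexOn ℝ Set.univ fun z => deltaH s z₀ z := by
    have h1 : ConvexOn ℝ Set.univ fun z : ℝ => hfun s z := by
      unfold hfun
      simpa [smul_eq_mul] using habs_cvx.smul hc.le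
    have haff : ConvexOn ℝ Set.univ fun z : ℝ => -(hfun s z₀) - hder s z₀ * (z - z₀) := by
      refine ⟨convex_univ, fun x _ y _ a b ha hb hab => ?_⟩
      simp only [smul_eq_mul]
      apply le_of_eq
      have hb' : b = 1 - a := by linarith
      subst hb'
      ring
    have heq : (fun z => deltaH s z₀ z)
        = fun z => hfun s z + (-(hfun s z₀) - hder s z₀ * (z - z₀)) := by
      funext z; unfold deltaH; ring
    rw [heq]
    exact h1.add haff
  have hconvS : Convex ℝ (secH s R z₀) := by
    have h := hcvx.convex_lt R
    simpa [Set.sep_univ, secH] using h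
  have hord : Set.OrdConnected (secH s R z₀) := hconvS.ordConnected
  -- boundedness
  obtain ⟨c, hcdef⟩ : ∃ c : ℝ, c = s ^ 2 / (1 - s) := ⟨_, rfl⟩
  have hc' : 0 < c := hcdef ▸ hc
  obtain ⟨A, hAdef⟩ : ∃ A : ℝ, A = |hder s z₀| := ⟨_, rfl⟩
  have hA : 0 ≤ A := hAdef ▸ abs_nonneg _
  obtain ⟨B, hBdef⟩ : ∃ B : ℝ, B = c * |z₀| ^ (1 / s) + A * |z₀| := ⟨_, rfl⟩
  have hB : 0 ≤ B := by
    rw [hBdef]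
    have : (0:ℝ) ≤ |z₀| ^ (1 / s) := Real.rpow_nonneg (abs_nonneg _) _
    positivity
  obtain ⟨Z, hZdef⟩ : ∃ Z : ℝ, Z = max 1 (((A + R + B) / c) ^ (1 / (1 / s - 1))) := ⟨_, rfl⟩
  have hZ1 : 1 ≤ Z := hZdef ▸ le_max_left _ _
  have hbdd : ∀ z ∈ secH s R z₀, |z| < Z := by
    intro z hz
    by_contra hcon
    push_neg at hcon
    have habs1 : 1 ≤ |z| := le_trans hZ1 hcon
    have hzpos : 0 < |z| := by linarith
    have h1 : (A + R + B) / c ≤ |z| ^ (1 / s - 1) := by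
      calc (A + R + B) / c
          = (((A + R + B) / c) ^ (1 / (1 / s - 1))) ^ (1 / s - 1) := by
            rw [one_div (1 / s - 1), Real.rpow_inv_rpow (by positivity) (by linarith)]
        _ ≤ Z ^ (1 / s - 1) := by
            apply Real.rpow_le_rpow (Real.rpow_nonneg (by positivity) _) _ (by linarith)
            rw [hZdef]; exact le_max_right _ _
        _ ≤ |z| ^ (1 / s - 1) := Real.rpow_le_rpow (by linarith) hcon (by linarith)
    have h2 : A + R + B ≤ c * |z| ^ (1 / s - 1) := by
      have := mul_le_mul_of_nonneg_left h1 hc'.le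
      rwa [mul_div_cancel₀ _ hc'.ne'] at this
    have hsplit : |z| ^ (1 / s) = |z| ^ (1 / s - 1) * |z| := by
      rw [← Real.rpow_add_one hzpos.ne' (1 / s - 1), sub_add_cancel]
    have h3 : (A + R + B) * |z| ≤ c * |z| ^ (1 / s) := by
      calc (A + R + B) * |z| ≤ c * |z| ^ (1 / s - 1) * |z| :=
            mul_le_mul_of_nonneg_right h2 (abs_nonneg z)
        _ = c * |z| ^ (1 / s) := by rw [mul_assoc, ← hsplit]
    have key : hder s z₀ * (z - z₀) ≤ A * |z| + A * |z₀| := by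
      calc hder s z₀ * (z - z₀) ≤ |hder s z₀ * (z - z₀)| := le_abs_self _
        _ = A * |z - z₀| := by rw [abs_mul, hAdef]
        _ ≤ A * (|z| + |z₀|) := by
            apply mul_le_mul_of_nonneg_left _ hA
            calc |z - z₀| = |z + -z₀| := by rw [sub_eq_add_neg]
              _ ≤ |z| + |-z₀| := abs_add_le _ _
              _ = |z| + |z₀| := by rw [abs_neg]
        _ = A * |z| + A * |z₀| := by ring
    have e1 : deltaH s z₀ z = c * |z| ^ (1 / s) - c * |z₀| ^ (1 / s) - hder s z₀ * (z - z₀) := by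
      rw [hcdef]; rfl
    have hδ : R ≤ deltaH s z₀ z := by
      rw [e1]
      have hR1 : R * 1 ≤ R * |z| := mul_le_mul_of_nonneg_left habs1 hR.le
      have hB1 : B * 1 ≤ B * |z| := mul_le_mul_of_nonneg_left habs1 hB
      have hB2 : B = c * |z₀| ^ (1 / s) + A * |z₀| := hBdef
      nlinarith [key, h3, hR1, hB1]
    have : deltaH s z₀ z < R := hz
    linarith
  have hne : (secH s R z₀).Nonempty := ⟨z₀, hz₀⟩
  have hbdda : BddAbove (secH s R z₀) := ⟨Z, fun z hz => (abs_lt.1 (hbdd z hz)).2.le⟩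
  have hbddb : BddBelow (secH s R z₀) := ⟨-Z, fun z hz => (abs_lt.1 (hbdd z hz)).1.le⟩
  have hseteq : secH s R z₀ = Ioo (sInf (secH s R z₀)) (sSup (secH s R z₀)) := by
    apply Set.Subset.antisymm
    · intro x hx
      obtain ⟨δ, hδ, hball⟩ := Metric.isOpen_iff.1 hopen x hx
      have hx1 : x - δ/2 ∈ secH s R z₀ := by
        apply hball
        rw [Metric.mem_ball, Real.dist_eq,
          show x - δ/2 - x = -(δ/2) by ring, abs_neg, abs_of_nonneg (by linarith)]
        linarith
      have hx2 : x + δ/2 ∈ secH s R z₀ := by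
        apply hball
        rw [Metric.mem_ball, Real.dist_eq,
          show x + δ/2 - x = δ/2 by ring, abs_of_nonneg (by linarith)]
        linarith
      constructor
      · calc sInf (secH s R z₀) ≤ x - δ/2 := csInf_le hbddb hx1
          _ < x := by linarith
      · calc x < x + δ/2 := by linarith
          _ ≤ sSup (secH s R z₀) := le_csSup hbdda hx2
    · intro x hx
      obtain ⟨y, hy, hyx⟩ := exists_lt_of_csInf_lt hne hx.1
      obtain ⟨y', hy', hxy'⟩ := exists_lt_of_lt_csSup hne hx.2
      exact hord.out hy hy' ⟨hyx.le, hxy'.le⟩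
  refine ⟨sInf (secH s R z₀), sSup (secH s R z₀), ?_, hseteq⟩
  rw [hseteq] at hz₀
  exact lt_trans hz₀.1 hz₀.2

end MuHAinftyAux

/-- **Lemma 3.2: `A_∞`-type absolute continuity** of `μ_h` with respect to Lebesgue measure on
sections. -/
theorem muH_Ainfty (s : ℝ) (hs0 : 0 < s) (hs1 : s < 1)
    (ε : ℝ) (hε0 : 0 < ε) (hε1 : ε < 1) :
    ∃ ε₀ : ℝ, 0 < ε₀ ∧ ε₀ < 1 ∧
      ∀ (R z₀ : ℝ), 0 < R → ∀ E : Set ℝ, MeasurableSet E → E ⊆ secH s R z₀ →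
        volume E < ENNReal.ofReal ε₀ * volume (secH s R z₀) →
        muH s E < ENNReal.ofReal ε * muH s (secH s R z₀) := by
  classical
  have hp : 1 < 1 / s := one_lt_one_div hs0 hs1
  obtain ⟨α, hαdef⟩ : ∃ α : ℝ, α = 1 / s - 2 := ⟨_, rfl⟩
  have hα1 : -1 < α := by rw [hαdef]; linarith
  have hα1' : 0 < α + 1 := by linarith
  have h2α : (0:ℝ) < 2 ^ α := Real.rpow_pos_of_pos two_pos α
  have h2nα : (0:ℝ) < 2 ^ (-α) := Real.rpow_pos_of_pos two_pos (-α)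
  obtain ⟨c₁, hc₁⟩ : ∃ c₁ : ℝ, c₁ = ε * 2 ^ (-α) / 8 := ⟨_, rfl⟩
  obtain ⟨c₂, hc₂⟩ : ∃ c₂ : ℝ, c₂ = ε * 2 ^ α / 2 := ⟨_, rfl⟩
  obtain ⟨K, hK⟩ : ∃ K : ℝ, K = ε * (α + 1) * 2 ^ (α - 1) := ⟨_, rfl⟩
  have hKpos : 0 < K := by rw [hK]; positivity
  obtain ⟨c₃, hc₃⟩ : ∃ c₃ : ℝ, c₃ = 2 * (K / 2) ^ (1 / (α + 1)) := ⟨_, rfl⟩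
  have hc₁0 : 0 < c₁ := by rw [hc₁]; positivity
  have hc₂0 : 0 < c₂ := by rw [hc₂]; positivity
  have hc₃0 : 0 < c₃ := by
    rw [hc₃]
    have : (0:ℝ) < (K / 2) ^ (1 / (α + 1)) := Real.rpow_pos_of_pos (by linarith) _
    linarith
  obtain ⟨ε₀, hε₀⟩ : ∃ e : ℝ, e = min (min c₁ c₂) (min c₃ (1/2)) := ⟨_, rfl⟩
  have hε₀0 : 0 < ε₀ := by
    rw [hε₀]
    exact lt_min (lt_min hc₁0 hc₂0) (lt_min hc₃0 (by norm_num))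
  have hε₀c₁ : ε₀ ≤ c₁ := hε₀ ▸ (min_le_left _ _).trans (min_le_left _ _)
  have hε₀c₂ : ε₀ ≤ c₂ := hε₀ ▸ (min_le_left _ _).trans (min_le_right _ _)
  have hε₀c₃ : ε₀ ≤ c₃ := hε₀ ▸ (min_le_right _ _).trans (min_le_left _ _)
  have hε₀half : ε₀ ≤ 1/2 := hε₀ ▸ (min_le_right _ _).trans (min_le_right _ _)
  refine ⟨ε₀, hε₀0, by linarith, ?_⟩
  intro R z₀ hR E hEm hES hEvol
  obtain ⟨a, b, hab, hSeq⟩ := secH_Ioo' hs0 hs1 R z₀ hR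
  rw [hSeq] at hES hEvol ⊢
  obtain ⟨L, hL⟩ : ∃ L : ℝ, L = b - a := ⟨_, rfl⟩
  have hL0 : 0 < L := by rw [hL]; linarith
  have hvolS : volume (Ioo a b) = ENNReal.ofReal L := by rw [Real.volume_Ioo, hL]
  have hEvol' : volume E ≤ ENNReal.ofReal (ε₀ * L) := by
    rw [hvolS, ← ENNReal.ofReal_mul hε₀0.le] at hEvol
    exact hEvol.le
  have master : ∀ u v : ℝ, muH s E ≤ ENNReal.ofReal u → ENNReal.ofReal v ≤ muH s (Ioo a b) →
      u < ε * v → 0 < v → muH s E < ENNReal.ofReal ε * muH s (Ioo a b) := by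
    intro u v h1 h2 huv hv
    calc muH s E ≤ ENNReal.ofReal u := h1
      _ < ENNReal.ofReal (ε * v) := (ENNReal.ofReal_lt_ofReal_iff (by positivity)).2 huv
      _ = ENNReal.ofReal ε * ENNReal.ofReal v := ENNReal.ofReal_mul hε0.le
      _ ≤ _ := mul_le_mul_right h2 _
  rcases le_or_gt 0 α with hα0 | hα0
  · -- case α ≥ 0
    obtain ⟨M, hM⟩ : ∃ M : ℝ, M = max |a| |b| := ⟨_, rfl⟩
    have hMa : |a| ≤ M := hM ▸ le_max_left _ _
    have hMb : |b| ≤ M := hM ▸ le_max_right _ _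
    have hML : L ≤ 2 * M := by
      have h1 : b ≤ |b| := le_abs_self b
      have h2 : -|a| ≤ a := neg_abs_le a
      rw [hL]; linarith
    have hM0 : 0 < M := by linarith
    have hMα : 0 < M ^ α := Real.rpow_pos_of_pos hM0 _
    -- upper bound
    have hup : muH s E ≤ ENNReal.ofReal (M ^ α * (ε₀ * L)) := by
      have h1 : muH s E ≤ ENNReal.ofReal (M ^ α) * volume E := by
        apply muH_upper' s _ hEm
        intro z hz
        have hz' := hES hz
        have hzM : |z| ≤ M := by
          rw [abs_le]
          constructor
          · have := neg_abs_le a; linarith [hz'.1]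
          · have := le_abs_self b; linarith [hz'.2]
        rw [← hαdef]
        exact Real.rpow_le_rpow (abs_nonneg z) hzM hα0
      calc muH s E ≤ ENNReal.ofReal (M ^ α) * volume E := h1
        _ ≤ ENNReal.ofReal (M ^ α) * ENNReal.ofReal (ε₀ * L) := mul_le_mul_right hEvol' _
        _ = ENNReal.ofReal (M ^ α * (ε₀ * L)) := (ENNReal.ofReal_mul (by positivity)).symm
    -- lower bound on the section
    have hlow : ENNReal.ofReal ((M/2) ^ α * (L/4)) ≤ muH s (Ioo a b) := by
      have key : ∀ u v : ℝ, Ioo u v ⊆ Ioo a b → L/4 ≤ v - u →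
          (∀ z ∈ Ioo u v, M/2 ≤ |z|) → ENNReal.ofReal ((M/2) ^ α * (L/4)) ≤ muH s (Ioo a b) := by
        intro u v hsub hlen hdist
        have h1 : ENNReal.ofReal ((M/2) ^ α) * volume (Ioo u v) ≤ muH s (Ioo u v) := by
          apply muH_lower' s _ measurableSet_Ioo
          intro z hz _
          rw [← hαdef]
          exact Real.rpow_le_rpow (by positivity) (hdist z hz) hα0
        calc ENNReal.ofReal ((M/2) ^ α * (L/4))
            = ENNReal.ofReal ((M/2) ^ α) * ENNReal.ofReal (L/4) :=
              ENNReal.ofReal_mul (by positivity)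
          _ ≤ ENNReal.ofReal ((M/2) ^ α) * volume (Ioo u v) := by
              apply mul_le_mul_right
              rw [Real.volume_Ioo]
              exact ENNReal.ofReal_le_ofReal hlen
          _ ≤ muH s (Ioo u v) := h1
          _ ≤ muH s (Ioo a b) := measure_mono hsub
      rcases le_total |a| |b| with hcase | hcase
      · -- M = |b|, b > 0
        have hb0 : 0 < b := by
          by_contra h
          push_neg at h
          have h1 : |b| = -b := abs_of_nonpos h
          have h2 : |a| = -a := abs_of_nonpos (by linarith)
          rw [h1, h2] at hcase
          linarith
        have hMeq : M = b := by rw [hM, max_eq_right hcase, abs_of_pos hb0]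
        refine key (max a (b/2)) b (Ioo_subset_Ioo (le_max_left _ _) le_rfl) ?_ ?_
        · rcases le_total a (b/2) with h | h
          · rw [max_eq_right h]; rw [hL] at hML ⊢; linarith
          · rw [max_eq_left h]; rw [hL]; linarith
        · intro z hz
          have h1 : b/2 < z := lt_of_le_of_lt (le_max_right a (b/2)) hz.1
          have h2 : z ≤ |z| := le_abs_self z
          rw [hMeq]; linarith
      · -- M = |a|, a < 0
        have ha0 : a < 0 := by
          by_contra h
          push_neg at h
          have h1 : |a| = a := abs_of_nonneg h
          have h2 : |b| = b := abs_of_nonneg (by linarith)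
          rw [h1, h2] at hcase
          linarith
        have hMeq : M = -a := by rw [hM, max_eq_left hcase, abs_of_neg ha0]
        refine key a (min b (a/2)) (Ioo_subset_Ioo le_rfl (min_le_left _ _)) ?_ ?_
        · rcases le_total b (a/2) with h | h
          · rw [min_eq_left h]; rw [hL]; linarith
          · rw [min_eq_right h]; rw [hL] at hML ⊢; linarith
        · intro z hz
          have h1 : z < a/2 := lt_of_lt_of_le hz.2 (min_le_right b (a/2))
          have h2 : -z ≤ |z| := neg_le_abs z
          rw [hMeq]; linarith
    -- combine
    apply master _ _ hup hlow ?_ (by positivity)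
    have hhalf : (M/2) ^ α = M ^ α * 2 ^ (-α) := by
      rw [div_eq_mul_inv, Real.mul_rpow hM0.le (by norm_num),
        Real.inv_rpow (by norm_num), ← Real.rpow_neg (by norm_num)]
    rw [hhalf]
    have hpos : 0 < M ^ α * L := mul_pos hMα hL0
    have step1 : M ^ α * (ε₀ * L) ≤ ε * 2 ^ (-α) / 8 * (M ^ α * L) := by
      have h := mul_le_mul_of_nonneg_right hε₀c₁ hpos.le
      rw [hc₁] at h
      calc M ^ α * (ε₀ * L) = ε₀ * (M ^ α * L) := by ring
        _ ≤ ε * 2 ^ (-α) / 8 * (M ^ α * L) := h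
    have step2 : ε * 2 ^ (-α) / 8 * (M ^ α * L) < ε * 2 ^ (-α) / 4 * (M ^ α * L) := by
      apply mul_lt_mul_of_pos_right _ hpos
      have : 0 < ε * 2 ^ (-α) := mul_pos hε0 h2nα
      linarith
    calc M ^ α * (ε₀ * L) ≤ ε * 2 ^ (-α) / 8 * (M ^ α * L) := step1
      _ < ε * 2 ^ (-α) / 4 * (M ^ α * L) := step2
      _ = ε * (M ^ α * 2 ^ (-α) * (L/4)) := by ring
  · -- case α < 0
    by_cases hcase1 : 0 < a ∧ b ≤ 2 * a
    · obtain ⟨ha0, hb2a⟩ := hcase1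
      have haα : 0 < a ^ α := Real.rpow_pos_of_pos ha0 _
      have hup : muH s E ≤ ENNReal.ofReal (a ^ α * (ε₀ * L)) := by
        have h1 : muH s E ≤ ENNReal.ofReal (a ^ α) * volume E := by
          apply muH_upper' s _ hEm
          intro z hz
          have hz' := hES hz
          have : a ≤ |z| := (le_abs_self z).trans' hz'.1.le
          rw [← hαdef]
          exact Real.rpow_le_rpow_of_nonpos ha0 this hα0.le
        calc muH s E ≤ ENNReal.ofReal (a ^ α) * volume E := h1
          _ ≤ ENNReal.ofReal (a ^ α) * ENNReal.ofReal (ε₀ * L) := mul_le_mul_right hEvol' _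
          _ = ENNReal.ofReal (a ^ α * (ε₀ * L)) := (ENNReal.ofReal_mul (by positivity)).symm
      have hlow : ENNReal.ofReal ((2*a) ^ α * L) ≤ muH s (Ioo a b) := by
        have h1 : ENNReal.ofReal ((2*a) ^ α) * volume (Ioo a b) ≤ muH s (Ioo a b) := by
          apply muH_lower' s _ measurableSet_Ioo
          intro z hz _
          have hz0 : 0 < z := lt_trans ha0 hz.1
          have : |z| ≤ 2*a := by rw [abs_of_pos hz0]; linarith [hz.2]
          rw [← hαdef]
          exact Real.rpow_le_rpow_of_nonpos (abs_pos.2 hz0.ne') this hα0.le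
        rwa [hvolS, ← ENNReal.ofReal_mul (by positivity)] at h1
      apply master _ _ hup hlow ?_ (by positivity)
      have h2aα : (2*a) ^ α = 2 ^ α * a ^ α := Real.mul_rpow (by norm_num) ha0.le
      rw [h2aα]
      have hpos : 0 < a ^ α * L := mul_pos haα hL0
      have step1 : a ^ α * (ε₀ * L) ≤ ε * 2 ^ α / 2 * (a ^ α * L) := by
        have h := mul_le_mul_of_nonneg_right hε₀c₂ hpos.le
        rw [hc₂] at h
        calc a ^ α * (ε₀ * L) = ε₀ * (a ^ α * L) := by ring
          _ ≤ ε * 2 ^ α / 2 * (a ^ α * L) := h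
      have step2 : ε * 2 ^ α / 2 * (a ^ α * L) < ε * 2 ^ α * (a ^ α * L) := by
        apply mul_lt_mul_of_pos_right _ hpos
        have : 0 < ε * 2 ^ α := mul_pos hε0 h2α
        linarith
      calc a ^ α * (ε₀ * L) ≤ ε * 2 ^ α / 2 * (a ^ α * L) := step1
        _ < ε * 2 ^ α * (a ^ α * L) := step2
        _ = ε * (2 ^ α * a ^ α * L) := by ring
    · by_cases hcase2 : b < 0 ∧ 2 * b ≤ a
      · obtain ⟨hb0, h2b⟩ := hcase2
        have hbα : 0 < (-b) ^ α := Real.rpow_pos_of_pos (by linarith) _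
        have hup : muH s E ≤ ENNReal.ofReal ((-b) ^ α * (ε₀ * L)) := by
          have h1 : muH s E ≤ ENNReal.ofReal ((-b) ^ α) * volume E := by
            apply muH_upper' s _ hEm
            intro z hz
            have hz' := hES hz
            have : -b ≤ |z| := (neg_le_abs z).trans' (by linarith [hz'.2])
            rw [← hαdef]
            exact Real.rpow_le_rpow_of_nonpos (by linarith) this hα0.le
          calc muH s E ≤ ENNReal.ofReal ((-b) ^ α) * volume E := h1
            _ ≤ ENNReal.ofReal ((-b) ^ α) * ENNReal.ofReal (ε₀ * L) := mul_le_mul_right hEvol' _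
            _ = ENNReal.ofReal ((-b) ^ α * (ε₀ * L)) := (ENNReal.ofReal_mul (by positivity)).symm
        have hlow : ENNReal.ofReal ((2*(-b)) ^ α * L) ≤ muH s (Ioo a b) := by
          have h1 : ENNReal.ofReal ((2*(-b)) ^ α) * volume (Ioo a b) ≤ muH s (Ioo a b) := by
            apply muH_lower' s _ measurableSet_Ioo
            intro z hz _
            have hz0 : z < 0 := lt_trans hz.2 hb0
            have : |z| ≤ 2*(-b) := by rw [abs_of_neg hz0]; linarith [hz.1]
            rw [← hαdef]
            exact Real.rpow_le_rpow_of_nonpos (abs_pos.2 hz0.ne) this hα0.le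
          rwa [hvolS, ← ENNReal.ofReal_mul (Real.rpow_nonneg (by linarith) α)] at h1
        apply master _ _ hup hlow ?_
          (mul_pos (Real.rpow_pos_of_pos (by linarith) α) hL0)
        have h2bα : (2*(-b)) ^ α = 2 ^ α * (-b) ^ α := Real.mul_rpow (by norm_num) (by linarith)
        rw [h2bα]
        have hpos : 0 < (-b) ^ α * L := mul_pos hbα hL0
        have step1 : (-b) ^ α * (ε₀ * L) ≤ ε * 2 ^ α / 2 * ((-b) ^ α * L) := by
          have h := mul_le_mul_of_nonneg_right hε₀c₂ hpos.le
          rw [hc₂] at h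
          calc (-b) ^ α * (ε₀ * L) = ε₀ * ((-b) ^ α * L) := by ring
            _ ≤ ε * 2 ^ α / 2 * ((-b) ^ α * L) := h
        have step2 : ε * 2 ^ α / 2 * ((-b) ^ α * L) < ε * 2 ^ α * ((-b) ^ α * L) := by
          apply mul_lt_mul_of_pos_right _ hpos
          have : 0 < ε * 2 ^ α := mul_pos hε0 h2α
          linarith
        calc (-b) ^ α * (ε₀ * L) ≤ ε * 2 ^ α / 2 * ((-b) ^ α * L) := step1
          _ < ε * 2 ^ α * ((-b) ^ α * L) := step2
          _ = ε * (2 ^ α * (-b) ^ α * L) := by ring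
      · -- central case : the section is close to the origin
        push_neg at hcase1 hcase2
        have hz2L : ∀ z ∈ Ioo a b, |z| < 2 * L := by
          intro z hz
          rw [abs_lt]
          constructor
          · rcases le_or_gt 0 b with h | h
            · rw [hL]; linarith [hz.1]
            · have := hcase2 h; rw [hL]; linarith [hz.1]
          · rcases le_or_gt a 0 with h | h
            · rw [hL]; linarith [hz.2]
            · have := hcase1 h; rw [hL]; linarith [hz.2]
        obtain ⟨r, hr⟩ : ∃ r : ℝ, r = ε₀ * L / 2 := ⟨_, rfl⟩
        have hr0 : 0 < r := by rw [hr]; positivity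
        have hrα : 0 < r ^ α := Real.rpow_pos_of_pos hr0 _
        have hvolB : volume (Ioo (-r) r) = ENNReal.ofReal (ε₀ * L) := by
          rw [Real.volume_Ioo]; congr 1; rw [hr]; ring
        have hvolEB : volume E ≤ volume (Ioo (-r) r) := by rw [hvolB]; exact hEvol'
        have hBm : MeasurableSet (Ioo (-r) r) := measurableSet_Ioo
        -- rearrangement: volume (E \ B) ≤ volume (B \ E)
        have hEdiff : volume (E \ Ioo (-r) r) ≤ volume (Ioo (-r) r \ E) := by
          have h1 : volume (E ∩ Ioo (-r) r) + volume (E \ Ioo (-r) r) = volume E :=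
            measure_inter_add_diff E hBm
          have h2 : volume (Ioo (-r) r ∩ E) + volume (Ioo (-r) r \ E) = volume (Ioo (-r) r) :=
            measure_inter_add_diff _ hEm
          rw [inter_comm] at h2
          have hfin : volume (E ∩ Ioo (-r) r) ≠ ⊤ :=
            (lt_of_le_of_lt (measure_mono inter_subset_right)
              (by rw [hvolB]; exact ENNReal.ofReal_lt_top)).ne
          have hchain : volume (E ∩ Ioo (-r) r) + volume (E \ Ioo (-r) r)
              ≤ volume (E ∩ Ioo (-r) r) + volume (Ioo (-r) r \ E) := by
            rw [h1, h2]; exact hvolEB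
          exact (ENNReal.add_le_add_iff_left hfin).1 hchain
        have hμEB : muH s (E \ Ioo (-r) r) ≤ muH s (Ioo (-r) r \ E) := by
          calc muH s (E \ Ioo (-r) r)
              ≤ ENNReal.ofReal (r ^ α) * volume (E \ Ioo (-r) r) := by
                apply muH_upper' s _ (hEm.diff hBm)
                intro z hz
                have hnb := hz.2
                rw [Set.mem_Ioo, not_and_or, not_lt, not_lt] at hnb
                have hrz : r ≤ |z| := by
                  rcases hnb with h | h
                  · rw [abs_of_nonpos (by linarith)]; linarith
                  · exact h.trans (le_abs_self z)
                rw [← hαdef]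
                exact Real.rpow_le_rpow_of_nonpos hr0 hrz hα0.le
            _ ≤ ENNReal.ofReal (r ^ α) * volume (Ioo (-r) r \ E) := mul_le_mul_right hEdiff _
            _ ≤ muH s (Ioo (-r) r \ E) := by
                apply muH_lower' s _ (hBm.diff hEm)
                intro z hz hz0
                have hzr : |z| ≤ r := (abs_lt.2 hz.1).le
                rw [← hαdef]
                exact Real.rpow_le_rpow_of_nonpos (abs_pos.2 hz0) hzr hα0.le
        have hμE_B : muH s E ≤ muH s (Ioo (-r) r) := by
          calc muH s E = muH s (E ∩ Ioo (-r) r) + muH s (E \ Ioo (-r) r) :=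
              (measure_inter_add_diff E hBm).symm
            _ ≤ muH s (E ∩ Ioo (-r) r) + muH s (Ioo (-r) r \ E) := add_le_add le_rfl hμEB
            _ = muH s (Ioo (-r) r ∩ E) + muH s (Ioo (-r) r \ E) := by rw [inter_comm]
            _ = muH s (Ioo (-r) r) := measure_inter_add_diff _ hEm
        -- value of muH on the symmetric interval
        have hIoo : muH s (Ioo 0 r) = ENNReal.ofReal (r ^ (α+1) / (α+1)) := by
          have h := muH_Ioo' s r (hαdef ▸ hα1) hr0
          have he : 1 / s - 1 = α + 1 := by rw [hαdef]; ring
          rwa [he] at h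
        have hsing : muH s ({(0:ℝ)} : Set ℝ) = 0 := by
          rw [muH_apply' s (measurableSet_singleton 0),
            Measure.restrict_eq_zero.2 (measure_singleton 0), lintegral_zero_measure]
        have hμB : muH s (Ioo (-r) r) ≤ ENNReal.ofReal (2 * (r ^ (α+1) / (α+1))) := by
          have hsub : Ioo (-r) r ⊆ Ioo (-r) 0 ∪ ({(0:ℝ)} ∪ Ioo 0 r) := by
            intro z hz
            rcases lt_trichotomy z 0 with h | h | h
            · exact Or.inl ⟨hz.1, h⟩
            · exact Or.inr (Or.inl (by simp [h]))
            · exact Or.inr (Or.inr ⟨h, hz.2⟩)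
          calc muH s (Ioo (-r) r)
              ≤ muH s (Ioo (-r) 0) + muH s ({(0:ℝ)} ∪ Ioo 0 r) :=
                le_trans (measure_mono hsub) (measure_union_le _ _)
            _ ≤ muH s (Ioo (-r) 0) + (muH s ({(0:ℝ)} : Set ℝ) + muH s (Ioo 0 r)) :=
                add_le_add le_rfl (measure_union_le _ _)
            _ = muH s (Ioo 0 r) + muH s (Ioo 0 r) := by
                rw [hsing, zero_add, muH_Ioo_neg' s r]
            _ = ENNReal.ofReal (2 * (r ^ (α+1) / (α+1))) := by
                rw [hIoo, ← ENNReal.ofReal_add (by positivity) (by positivity)]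
                congr 1
                ring
        apply master (2 * (r ^ (α+1) / (α+1))) ((2*L) ^ α * L) (hμE_B.trans hμB) ?_ ?_
          (by positivity)
        · -- lower bound on the section
          have h1 : ENNReal.ofReal ((2*L) ^ α) * volume (Ioo a b) ≤ muH s (Ioo a b) := by
            apply muH_lower' s _ measurableSet_Ioo
            intro z hz hz0
            rw [← hαdef]
            exact Real.rpow_le_rpow_of_nonpos (abs_pos.2 hz0) (hz2L z hz).le hα0.le
          rwa [hvolS, ← ENNReal.ofReal_mul (by positivity)] at h1
        · -- numerical inequality
          have hrL : r = (ε₀/2) * L := by rw [hr]; ring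
          have hrpow : r ^ (α+1) = (ε₀/2) ^ (α+1) * L ^ (α+1) := by
            rw [hrL]; exact Real.mul_rpow (by positivity) hL0.le
          have hKbound : (ε₀/2) ^ (α+1) ≤ K/2 := by
            have h1 : ε₀/2 ≤ (K/2) ^ (1/(α+1)) := by rw [hc₃] at hε₀c₃; linarith
            calc (ε₀/2) ^ (α+1) ≤ ((K/2) ^ (1/(α+1))) ^ (α+1) :=
                Real.rpow_le_rpow (by positivity) h1 hα1'.le
              _ = K/2 := by
                rw [one_div, Real.rpow_inv_rpow (by linarith) hα1'.ne']
          have hLα : 0 < L ^ (α+1) := Real.rpow_pos_of_pos hL0 _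
          have h2L : (2*L) ^ α * L = 2 ^ α * L ^ (α+1) := by
            rw [Real.mul_rpow (by norm_num) hL0.le, Real.rpow_add_one hL0.ne' α]
            ring
          rw [h2L]
          have hstep1 : 2 * (r ^ (α+1) / (α+1)) ≤ ε * 2 ^ (α-1) * L ^ (α+1) := by
            rw [hrpow]
            have h1 : (ε₀/2) ^ (α+1) * L ^ (α+1) ≤ K/2 * L ^ (α+1) :=
              mul_le_mul_of_nonneg_right hKbound hLα.le
            have h2 : 2 * ((K/2) * L ^ (α+1) / (α+1)) = ε * 2 ^ (α-1) * L ^ (α+1) := by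
              rw [hK]; field_simp
            calc 2 * ((ε₀/2) ^ (α+1) * L ^ (α+1) / (α+1))
                ≤ 2 * ((K/2) * L ^ (α+1) / (α+1)) := by
                  apply mul_le_mul_of_nonneg_left _ (by norm_num)
                  exact div_le_div_of_nonneg_right h1 hα1'.le
              _ = ε * 2 ^ (α-1) * L ^ (α+1) := h2
          have hstep2 : ε * 2 ^ (α-1) * L ^ (α+1) < ε * 2 ^ α * L ^ (α+1) := by
            have h1 : (2:ℝ) ^ (α-1) < 2 ^ α :=
              Real.rpow_lt_rpow_of_exponent_lt one_lt_two (by linarith)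
            have h2 : 0 < ε * L ^ (α+1) := mul_pos hε0 hLα
            calc ε * 2 ^ (α-1) * L ^ (α+1) = ε * L ^ (α+1) * 2 ^ (α-1) := by ring
              _ < ε * L ^ (α+1) * 2 ^ α := mul_lt_mul_of_pos_left h1 h2
              _ = ε * 2 ^ α * L ^ (α+1) := by ring
          calc 2 * (r ^ (α+1) / (α+1)) ≤ ε * 2 ^ (α-1) * L ^ (α+1) := hstep1
            _ < ε * 2 ^ α * L ^ (α+1) := hstep2
            _ = ε * (2 ^ α * L ^ (α+1)) := by ring
end
end
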